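/- arXiv:1805.11743 — 4 statements merged into one kernel-verified Lean document; each statement's English description precedes it below -/
import Mathlib

section
/- Let (Z,η) be a Lebesgue probability space and let Q̃ be a measure-preserving Markov operator on L¹(Z,η) such that every ψ ∈ L²(Z,η) with Q̃*Q̃ψ = ψ is a.e. constant. Then Q̃ is mixing: for all φ, ψ ∈ L²(Z,η), ∫_Z (Q̃^n φ)·ψ̄ dη → (∫_Z φ dη)·(∫_Z ψ̄ dη) as n → ∞. -/
open MeasureTheory Filter ENNReal Topology

noncomputable section

/-- The constant function `1` as an element of `L¹(Z,η)`. -/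
def oneL1 {Z : Type*} [MeasurableSpace Z] (η : Measure Z) [IsFiniteMeasure η] : Lp ℝ 1 η :=
  MemLp.toLp (fun _ => (1 : ℝ)) (memLp_const 1)

/-- A measure-preserving Markov operator on `L¹(Z,η)`: positive, fixes the constants,
and preserves the integral. -/
def IsMarkovOp {Z : Type*} [MeasurableSpace Z] (η : Measure Z) [IsFiniteMeasure η]
    (Q : Lp ℝ 1 η →ₗ[ℝ] Lp ℝ 1 η) : Prop :=
  (∀ φ : Lp ℝ 1 η, 0 ≤ φ → 0 ≤ Q φ) ∧
  Q (oneL1 η) = oneL1 η ∧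
  ∀ φ : Lp ℝ 1 η, ∫ z, (Q φ : Z → ℝ) z ∂η = ∫ z, (φ : Z → ℝ) z ∂η

/-- `Qs` agrees on `L²(Z,η)` with the Hilbert-space adjoint of the restriction of `Q` to `L²`. -/
def MarkovAdjoint {Z : Type*} [MeasurableSpace Z] (η : Measure Z) [IsFiniteMeasure η]
    (Q Qs : Lp ℝ 1 η →ₗ[ℝ] Lp ℝ 1 η) : Prop :=
  ∀ φ ψ : Lp ℝ 1 η, MemLp (φ : Z → ℝ) 2 η → MemLp (ψ : Z → ℝ) 2 η →
    ∫ z, (Q φ : Z → ℝ) z * (ψ : Z → ℝ) z ∂η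
      = ∫ z, (φ : Z → ℝ) z * (Qs ψ : Z → ℝ) z ∂η

namespace Statement1Aux

variable {Z : Type*} [MeasurableSpace Z] {η : Measure Z} [IsProbabilityMeasure η]

lemma oneL1_coe : ((oneL1 η : Lp ℝ 1 η) : Z → ℝ) =ᵐ[η] fun _ => (1:ℝ) :=
  MemLp.coeFn_toLp _

/-- Inclusion of `L²` into `L¹`. -/
def incl (x : Lp ℝ 2 η) : Lp ℝ 1 η :=
  ((Lp.memLp x).mono_exponent (by norm_num)).toLp _

lemma incl_coe (x : Lp ℝ 2 η) : ((incl x : Lp ℝ 1 η) : Z → ℝ) =ᵐ[η] (x : Z → ℝ) :=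
  MemLp.coeFn_toLp _

lemma incl_mem2 (x : Lp ℝ 2 η) : MemLp ((incl x : Lp ℝ 1 η) : Z → ℝ) 2 η :=
  (memLp_congr_ae (incl_coe x)).2 (Lp.memLp x)

lemma incl_eq {x : Lp ℝ 2 η} {f : Lp ℝ 1 η} (h : (x : Z → ℝ) =ᵐ[η] (f : Z → ℝ)) :
    incl x = f := Lp.ext ((incl_coe x).trans h)

lemma integral_incl (x : Lp ℝ 2 η) :
    ∫ z, ((incl x : Lp ℝ 1 η) : Z → ℝ) z ∂η = ∫ z, (x : Z → ℝ) z ∂η :=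
  integral_congr_ae (incl_coe x)

variable {Q : Lp ℝ 1 η →ₗ[ℝ] Lp ℝ 1 η}

lemma markov_bound (hQ : IsMarkovOp η Q) {f : Lp ℝ 1 η} (hf : MemLp (f : Z → ℝ) 2 η) :
    MemLp ((Q f : Lp ℝ 1 η) : Z → ℝ) 2 η ∧
      ∫ z, ((Q f : Lp ℝ 1 η) : Z → ℝ) z ^ 2 ∂η ≤ ∫ z, (f : Z → ℝ) z ^ 2 ∂η := by
  set fsq : Lp ℝ 1 η :=
    (memLp_one_iff_integrable.mpr hf.integrable_sq).toLp _ with hfsq_def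
  have hfsq_coe : ((fsq : Lp ℝ 1 η) : Z → ℝ) =ᵐ[η] fun z => (f : Z → ℝ) z ^ 2 :=
    MemLp.coeFn_toLp _
  have key : ∀ᵐ z ∂η, ∀ q : ℚ,
      0 ≤ ((Q fsq : Lp ℝ 1 η) : Z → ℝ) z - 2*(q:ℝ)*((Q f : Lp ℝ 1 η) : Z → ℝ) z + (q:ℝ)^2 := by
    rw [ae_all_iff]
    intro q
    have h1 : (0 : Lp ℝ 1 η) ≤ fsq - (2*(q:ℝ)) • f + ((q:ℝ)^2) • oneL1 η := by
      refine (Lp.coeFn_nonneg _).mp ?_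
      filter_upwards [Lp.coeFn_add (fsq - (2*(q:ℝ)) • f) (((q:ℝ)^2) • oneL1 η),
        Lp.coeFn_sub fsq ((2*(q:ℝ)) • f), Lp.coeFn_smul (2*(q:ℝ)) f,
        Lp.coeFn_smul ((q:ℝ)^2) (oneL1 η), oneL1_coe (η := η), hfsq_coe]
        with z e1 e2 e3 e4 e5 e6
      simp only [Pi.add_apply, Pi.sub_apply, Pi.smul_apply, smul_eq_mul, Pi.zero_apply] at *
      rw [e1, e2, e3, e4, e5, e6]
      nlinarith [sq_nonneg ((f : Z → ℝ) z - (q:ℝ))]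
    have h2 := hQ.1 _ h1
    rw [map_add, map_sub, _root_.map_smul, _root_.map_smul, hQ.2.1] at h2
    have h3 := (Lp.coeFn_nonneg _).mpr h2
    filter_upwards [h3, Lp.coeFn_add (Q fsq - (2*(q:ℝ)) • Q f) (((q:ℝ)^2) • oneL1 η),
      Lp.coeFn_sub (Q fsq) ((2*(q:ℝ)) • Q f), Lp.coeFn_smul (2*(q:ℝ)) (Q f),
      Lp.coeFn_smul ((q:ℝ)^2) (oneL1 η), oneL1_coe (η := η)]
      with z e0 e1 e2 e3 e4 e5
    simp only [Pi.add_apply, Pi.sub_apply, Pi.smul_apply, smul_eq_mul, Pi.zero_apply] at *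
    rw [e1, e2, e3, e4, e5] at e0
    linarith
  have hsq : ∀ᵐ z ∂η, ((Q f : Lp ℝ 1 η) : Z → ℝ) z ^ 2 ≤ ((Q fsq : Lp ℝ 1 η) : Z → ℝ) z := by
    filter_upwards [key] with z hz
    set g := ((Q f : Lp ℝ 1 η) : Z → ℝ) z with hg
    set F := ((Q fsq : Lp ℝ 1 η) : Z → ℝ) z with hF
    by_contra hlt
    push_neg at hlt
    have hδ : 0 < g^2 - F := by linarith
    obtain ⟨q, hq⟩ := exists_rat_near g (Real.sqrt_pos.mpr hδ)
    have h1 : (g - (q:ℝ))^2 < g^2 - F := by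
      have h2 : |g - (q:ℝ)|^2 < Real.sqrt (g^2-F)^2 :=
        pow_lt_pow_left₀ hq (abs_nonneg _) (by norm_num)
      rwa [sq_abs, Real.sq_sqrt hδ.le] at h2
    have h3 := hz q
    nlinarith
  have hmeas := Lp.aestronglyMeasurable (Q f)
  have hm2 : AEStronglyMeasurable (fun z => ((Q f : Lp ℝ 1 η) : Z → ℝ) z ^ 2) η := by
    exact hmeas.pow 2
  have hint : Integrable (fun z => ((Q f : Lp ℝ 1 η) : Z → ℝ) z ^ 2) η := by
    refine Integrable.mono' (L1.integrable_coeFn (Q fsq)) hm2 ?_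
    filter_upwards [hsq] with z hz
    rw [Real.norm_eq_abs, abs_of_nonneg (sq_nonneg _)]
    exact hz
  have hmem : MemLp ((Q f : Lp ℝ 1 η) : Z → ℝ) 2 η :=
    (memLp_two_iff_integrable_sq hmeas).mpr hint
  refine ⟨hmem, ?_⟩
  calc ∫ z, ((Q f : Lp ℝ 1 η) : Z → ℝ) z ^ 2 ∂η
      ≤ ∫ z, ((Q fsq : Lp ℝ 1 η) : Z → ℝ) z ∂η :=
        integral_mono_ae hint (L1.integrable_coeFn _) hsq
    _ = ∫ z, ((fsq : Lp ℝ 1 η) : Z → ℝ) z ∂η := hQ.2.2 fsq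
    _ = ∫ z, (f : Z → ℝ) z ^ 2 ∂η := integral_congr_ae hfsq_coe


lemma inner_eq (f g : Lp ℝ 2 η) :
    (inner ℝ f g : ℝ) = ∫ z, (f : Z → ℝ) z * (g : Z → ℝ) z ∂η := by
  rw [MeasureTheory.L2.inner_def]; simp [RCLike.inner_apply, mul_comm]

lemma norm_sq_eq (f : Lp ℝ 2 η) : ‖f‖ ^ 2 = ∫ z, (f : Z → ℝ) z ^ 2 ∂η := by
  rw [← real_inner_self_eq_norm_sq, inner_eq]
  refine integral_congr_ae (Eventually.of_forall fun z => ?_)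
  ring

/-- `Q` as a map on `L²`. -/
def Tfun (hQ : IsMarkovOp η Q) (x : Lp ℝ 2 η) : Lp ℝ 2 η :=
  ((markov_bound hQ (incl_mem2 x)).1).toLp _

lemma Tfun_coe (hQ : IsMarkovOp η Q) (x : Lp ℝ 2 η) :
    ((Tfun hQ x : Lp ℝ 2 η) : Z → ℝ) =ᵐ[η] ((Q (incl x) : Lp ℝ 1 η) : Z → ℝ) :=
  MemLp.coeFn_toLp _

lemma incl_Tfun (hQ : IsMarkovOp η Q) (x : Lp ℝ 2 η) :
    incl (Tfun hQ x) = Q (incl x) := incl_eq (Tfun_coe hQ x)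

lemma Tfun_eq (hQ : IsMarkovOp η Q) {x w : Lp ℝ 2 η}
    (h : ((Q (incl x) : Lp ℝ 1 η) : Z → ℝ) =ᵐ[η] (w : Z → ℝ)) : Tfun hQ x = w :=
  Lp.ext ((Tfun_coe hQ x).trans h)

lemma Tfun_add (hQ : IsMarkovOp η Q) (x y : Lp ℝ 2 η) :
    Tfun hQ (x + y) = Tfun hQ x + Tfun hQ y := by
  apply Tfun_eq
  have h1 : incl (x + y) = incl x + incl y := by
    apply incl_eq
    filter_upwards [Lp.coeFn_add x y, Lp.coeFn_add (incl x) (incl y), incl_coe x, incl_coe y]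
      with z e1 e2 e3 e4
    simp only [Pi.add_apply] at *
    rw [e1, e2, e3, e4]
  rw [h1, map_add]
  filter_upwards [Lp.coeFn_add (Q (incl x)) (Q (incl y)),
    Lp.coeFn_add (Tfun hQ x) (Tfun hQ y), Tfun_coe hQ x, Tfun_coe hQ y] with z e1 e2 e3 e4
  simp only [Pi.add_apply] at *
  rw [e1, e2, e3, e4]

lemma Tfun_smul (hQ : IsMarkovOp η Q) (c : ℝ) (x : Lp ℝ 2 η) :
    Tfun hQ (c • x) = c • Tfun hQ x := by
  apply Tfun_eq
  have h1 : incl (c • x) = c • incl x := by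
    apply incl_eq
    filter_upwards [Lp.coeFn_smul c x, Lp.coeFn_smul c (incl x), incl_coe x] with z e1 e2 e3
    simp only [Pi.smul_apply, smul_eq_mul] at *
    rw [e1, e2, e3]
  rw [h1, _root_.map_smul]
  filter_upwards [Lp.coeFn_smul c (Q (incl x)), Lp.coeFn_smul c (Tfun hQ x), Tfun_coe hQ x]
    with z e1 e2 e3
  simp only [Pi.smul_apply, smul_eq_mul] at *
  rw [e1, e2, e3]

lemma Tfun_norm (hQ : IsMarkovOp η Q) (x : Lp ℝ 2 η) : ‖Tfun hQ x‖ ≤ ‖x‖ := by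
  have h1 : ‖Tfun hQ x‖ ^ 2 ≤ ‖x‖ ^ 2 := by
    rw [norm_sq_eq, norm_sq_eq]
    have e1 : ∫ z, ((Tfun hQ x : Lp ℝ 2 η) : Z → ℝ) z ^ 2 ∂η
        = ∫ z, ((Q (incl x) : Lp ℝ 1 η) : Z → ℝ) z ^ 2 ∂η := by
      refine integral_congr_ae ?_
      filter_upwards [Tfun_coe hQ x] with z e
      rw [e]
    have e2 : ∫ z, ((incl x : Lp ℝ 1 η) : Z → ℝ) z ^ 2 ∂η = ∫ z, (x : Z → ℝ) z ^ 2 ∂η := by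
      refine integral_congr_ae ?_
      filter_upwards [incl_coe x] with z e
      rw [e]
    rw [e1, ← e2]
    exact (markov_bound hQ (incl_mem2 x)).2
  nlinarith [norm_nonneg (Tfun hQ x), norm_nonneg x]

/-- `Q` as a continuous linear map on `L²`. -/
def Tclm (hQ : IsMarkovOp η Q) : Lp ℝ 2 η →L[ℝ] Lp ℝ 2 η :=
  LinearMap.mkContinuous
    { toFun := Tfun hQ, map_add' := Tfun_add hQ, map_smul' := Tfun_smul hQ } 1
    (fun x => by simpa using Tfun_norm hQ x)

lemma Tclm_apply (hQ : IsMarkovOp η Q) (x : Lp ℝ 2 η) : Tclm hQ x = Tfun hQ x := rfl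

/-- The constant function `1` in `L²`. -/
def one2 : Lp ℝ 2 η := (memLp_const (1:ℝ)).toLp _

lemma one2_coe : ((one2 : Lp ℝ 2 η) : Z → ℝ) =ᵐ[η] fun _ => (1:ℝ) := MemLp.coeFn_toLp _

lemma incl_one2 : incl (one2 : Lp ℝ 2 η) = oneL1 η :=
  incl_eq (one2_coe.trans oneL1_coe.symm)

lemma T_one (hQ : IsMarkovOp η Q) : Tclm hQ (one2 : Lp ℝ 2 η) = one2 := by
  rw [Tclm_apply]
  apply Tfun_eq
  rw [incl_one2, hQ.2.1]
  exact oneL1_coe.trans one2_coe.symm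

lemma integral_T (hQ : IsMarkovOp η Q) (x : Lp ℝ 2 η) :
    ∫ z, ((Tclm hQ x : Lp ℝ 2 η) : Z → ℝ) z ∂η = ∫ z, (x : Z → ℝ) z ∂η := by
  rw [Tclm_apply, ← integral_incl (Tfun hQ x), incl_Tfun hQ x, hQ.2.2, integral_incl]

lemma inner_one2_left (g : Lp ℝ 2 η) :
    (inner ℝ (one2 : Lp ℝ 2 η) g : ℝ) = ∫ z, (g : Z → ℝ) z ∂η := by
  rw [inner_eq]
  refine integral_congr_ae ?_
  filter_upwards [one2_coe (η := η)] with z e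
  rw [e, one_mul]

lemma inner_one2_right (g : Lp ℝ 2 η) :
    (inner ℝ g (one2 : Lp ℝ 2 η) : ℝ) = ∫ z, (g : Z → ℝ) z ∂η := by
  rw [← real_inner_comm, inner_one2_left]


variable {Qt Qs : Lp ℝ 1 η →ₗ[ℝ] Lp ℝ 1 η}

lemma T_adj (hQt : IsMarkovOp η Qt) (hQs : IsMarkovOp η Qs) (hadj : MarkovAdjoint η Qt Qs)
    (x y : Lp ℝ 2 η) : (inner ℝ (Tclm hQt x) y : ℝ) = inner ℝ x (Tclm hQs y) := by
  rw [inner_eq, inner_eq]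
  have e1 : ∫ z, ((Tclm hQt x : Lp ℝ 2 η) : Z → ℝ) z * (y : Z → ℝ) z ∂η
      = ∫ z, ((Qt (incl x) : Lp ℝ 1 η) : Z → ℝ) z * ((incl y : Lp ℝ 1 η) : Z → ℝ) z ∂η := by
    refine integral_congr_ae ?_
    filter_upwards [Tfun_coe hQt x, incl_coe y] with z a b
    rw [Tclm_apply, a, b]
  have e2 : ∫ z, (x : Z → ℝ) z * ((Tclm hQs y : Lp ℝ 2 η) : Z → ℝ) z ∂η
      = ∫ z, ((incl x : Lp ℝ 1 η) : Z → ℝ) z * ((Qs (incl y) : Lp ℝ 1 η) : Z → ℝ) z ∂η := by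
    refine integral_congr_ae ?_
    filter_upwards [Tfun_coe hQs y, incl_coe x] with z a b
    rw [Tclm_apply, a, b]
  rw [e1, e2]
  exact hadj (incl x) (incl y) (incl_mem2 x) (incl_mem2 y)


end Statement1Aux

open Statement1Aux in
set_option maxHeartbeats 2000000 in
/-- If `Q̃` is a measure-preserving Markov operator on `L¹(Z,η)` of a Lebesgue
probability space such that every `ψ ∈ L²` with `Q̃*Q̃ψ = ψ` is a.e. constant, then `Q̃` is mixing:
`⟨Q̃^n φ, ψ⟩ → (∫ φ)(∫ ψ)` for all `φ, ψ ∈ L²(Z,η)`. -/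
theorem statement1
    {Z : Type*} [MeasurableSpace Z] [StandardBorelSpace Z]
    (η : Measure Z) [IsProbabilityMeasure η]
    (Qt Qs : Lp ℝ 1 η →ₗ[ℝ] Lp ℝ 1 η)
    (hQt : IsMarkovOp η Qt) (hQs : IsMarkovOp η Qs) (hadj : MarkovAdjoint η Qt Qs)
    (hfix : ∀ ψ : Lp ℝ 1 η, MemLp (ψ : Z → ℝ) 2 η → Qs (Qt ψ) = ψ →
      ∃ c : ℝ, ψ = c • oneL1 η) :
    ∀ φ ψ : Lp ℝ 1 η, MemLp (φ : Z → ℝ) 2 η → MemLp (ψ : Z → ℝ) 2 η →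
      Tendsto (fun n : ℕ => ∫ z, ((Qt ^ n) φ : Z → ℝ) z * (ψ : Z → ℝ) z ∂η) atTop
        (𝓝 ((∫ z, (φ : Z → ℝ) z ∂η) * ∫ z, (ψ : Z → ℝ) z ∂η)) := by
  intro φ ψ hφ hψ
  -- L² representatives
  set x : Lp ℝ 2 η := hφ.toLp _ with hx_def
  set y : Lp ℝ 2 η := hψ.toLp _ with hy_def
  have hxφ : ((x : Lp ℝ 2 η) : Z → ℝ) =ᵐ[η] (φ : Z → ℝ) := MemLp.coeFn_toLp hφ
  have hyψ : ((y : Lp ℝ 2 η) : Z → ℝ) =ᵐ[η] (ψ : Z → ℝ) := MemLp.coeFn_toLp hψ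
  have hinclx : incl x = φ := incl_eq hxφ
  have hincly : incl y = ψ := incl_eq hyψ
  set cx := ∫ z, (φ : Z → ℝ) z ∂η with hcx
  set cy := ∫ z, (ψ : Z → ℝ) z ∂η with hcy
  have hintx : ∫ z, (x : Z → ℝ) z ∂η = cx := integral_congr_ae hxφ
  have hinty : ∫ z, (y : Z → ℝ) z ∂η = cy := integral_congr_ae hyψ
  set T : Lp ℝ 2 η →L[ℝ] Lp ℝ 2 η := Tclm hQt with hT_def
  set S : Lp ℝ 2 η →L[ℝ] Lp ℝ 2 η := Tclm hQs with hS_def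
  have hTnorm : ∀ v : Lp ℝ 2 η, ‖T v‖ ≤ ‖v‖ := fun v => Tfun_norm hQt v
  have hTone : T (one2 : Lp ℝ 2 η) = one2 := T_one hQt
  have hinclT : ∀ v : Lp ℝ 2 η, incl (T v) = Qt (incl v) := fun v => incl_Tfun hQt v
  have hinclS : ∀ v : Lp ℝ 2 η, incl (S v) = Qs (incl v) := fun v => incl_Tfun hQs v
  have hintT : ∀ v : Lp ℝ 2 η, ∫ z, ((T v : Lp ℝ 2 η) : Z → ℝ) z ∂η
      = ∫ z, (v : Z → ℝ) z ∂η := fun v => integral_T hQt v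
  have hadj1 : ∀ v w : Lp ℝ 2 η, (inner ℝ (T v) w : ℝ) = inner ℝ v (S w) :=
    fun v w => T_adj hQt hQs hadj v w
  have hadj2 : ∀ v w : Lp ℝ 2 η, (inner ℝ (S v) w : ℝ) = inner ℝ v (T w) := by
    intro v w
    calc (inner ℝ (S v) w : ℝ) = inner ℝ w (S v) := real_inner_comm _ _
      _ = inner ℝ (T w) v := (hadj1 w v).symm
      _ = inner ℝ v (T w) := real_inner_comm _ _
  -- the positive operator B = I - S∘T
  set B : Lp ℝ 2 η →L[ℝ] Lp ℝ 2 η := ContinuousLinearMap.id ℝ _ - S.comp T with hB_def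
  have hB_apply : ∀ v : Lp ℝ 2 η, B v = v - S (T v) := fun v => rfl
  have hBsym : ∀ v w : Lp ℝ 2 η, (inner ℝ (B v) w : ℝ) = inner ℝ v (B w) := by
    intro v w
    rw [hB_apply, hB_apply, inner_sub_left, inner_sub_right]
    rw [hadj2 (T v) w, (hadj1 v (T w)).symm]
  have hBinner : ∀ v : Lp ℝ 2 η, (inner ℝ (B v) v : ℝ) = ‖v‖^2 - ‖T v‖^2 := by
    intro v
    rw [hB_apply, inner_sub_left, hadj2 (T v) v, real_inner_self_eq_norm_sq,
      real_inner_self_eq_norm_sq]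
  have hBpos : ∀ v : Lp ℝ 2 η, 0 ≤ (inner ℝ (B v) v : ℝ) := by
    intro v
    rw [hBinner]
    have := hTnorm v
    nlinarith [norm_nonneg (T v), norm_nonneg v]
  have hBle : ∀ v : Lp ℝ 2 η, (inner ℝ (B v) v : ℝ) ≤ ‖v‖^2 := by
    intro v
    rw [hBinner]
    nlinarith [sq_nonneg ‖T v‖]
  have hCS : ∀ v w : Lp ℝ 2 η,
      (inner ℝ (B v) w : ℝ)^2 ≤ (inner ℝ (B v) v : ℝ) * (inner ℝ (B w) w : ℝ) := by
    intro v w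
    have hform : ∀ t : ℝ, 0 ≤ (inner ℝ (B w) w : ℝ) * (t*t)
        + (2 * (inner ℝ (B v) w : ℝ)) * t + (inner ℝ (B v) v : ℝ) := by
      intro t
      have h0 := hBpos (v + t • w)
      have hc : (inner ℝ (B w) v : ℝ) = inner ℝ (B v) w := by
        rw [hBsym w v]
        exact real_inner_comm _ _
      have hexp : (inner ℝ (B (v + t • w)) (v + t • w) : ℝ)
          = (inner ℝ (B w) w : ℝ) * (t*t) + (2 * (inner ℝ (B v) w : ℝ)) * t
            + (inner ℝ (B v) v : ℝ) := by
        rw [map_add, _root_.map_smul]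
        simp only [inner_add_left, inner_add_right, real_inner_smul_left,
          real_inner_smul_right]
        rw [hc]
        ring
      rw [hexp] at h0
      exact h0
    have hd := discrim_le_zero hform
    rw [discrim] at hd
    nlinarith [hd]
  have hBkey : ∀ v : Lp ℝ 2 η, ‖B v‖^2 ≤ (inner ℝ (B v) v : ℝ) := by
    intro v
    have h1 := hCS v (B v)
    have h2 := hBle (B v)
    have h3 : (inner ℝ (B v) (B v) : ℝ) = ‖B v‖^2 := real_inner_self_eq_norm_sq _
    have h4 := hBpos v
    rcases eq_or_lt_of_le (sq_nonneg ‖B v‖ : (0:ℝ) ≤ ‖B v‖^2) with h | h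
    · rw [← h]; exact h4
    · have h6 : ‖B v‖^2 * ‖B v‖^2 ≤ (inner ℝ (B v) v : ℝ) * ‖B v‖^2 := by nlinarith
      exact le_of_mul_le_mul_right h6 h
  -- mean-zero parts
  set φ0 : Lp ℝ 2 η := x - cx • one2 with hφ0
  set ψ0 : Lp ℝ 2 η := y - cy • one2 with hψ0
  have hint_sub : ∀ (v : Lp ℝ 2 η) (c : ℝ),
      ∫ z, ((v - c • one2 : Lp ℝ 2 η) : Z → ℝ) z ∂η = (∫ z, (v : Z → ℝ) z ∂η) - c := by
    intro v c
    have e : ((v - c • one2 : Lp ℝ 2 η) : Z → ℝ) =ᵐ[η] fun z => (v : Z → ℝ) z - c := by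
      filter_upwards [Lp.coeFn_sub v (c • one2), Lp.coeFn_smul c (one2 : Lp ℝ 2 η),
        one2_coe (η := η)] with z e1 e2 e3
      simp only [Pi.sub_apply, Pi.smul_apply, smul_eq_mul] at *
      rw [e1, e2, e3, mul_one]
    rw [integral_congr_ae e,
      integral_sub ((Lp.memLp v).integrable one_le_two) (integrable_const c), integral_const]
    simp
  have hintφ0 : ∫ z, ((φ0 : Lp ℝ 2 η) : Z → ℝ) z ∂η = 0 := by
    rw [hφ0, hint_sub, hintx]; ring
  have hintψ0 : ∫ z, ((ψ0 : Lp ℝ 2 η) : Z → ℝ) z ∂η = 0 := by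
    rw [hψ0, hint_sub, hinty]; ring
  -- the iterates
  set u : ℕ → Lp ℝ 2 η := fun n => (⇑T)^[n] φ0 with hu
  have hu0 : u 0 = φ0 := rfl
  have husucc : ∀ n, u (n+1) = T (u n) := fun n => Function.iterate_succ_apply' _ n _
  have hunorm : ∀ n, ‖u n‖ ≤ ‖φ0‖ := by
    intro n
    induction n with
    | zero => simp [hu0]
    | succ n ih => rw [husucc]; exact (hTnorm (u n)).trans ih
  have hint_u : ∀ n, ∫ z, ((u n : Lp ℝ 2 η) : Z → ℝ) z ∂η = 0 := by
    intro n
    induction n with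
    | zero => exact hintφ0
    | succ n ih => rw [husucc, hintT, ih]
  set b : ℕ → ℝ := fun n => ‖u n‖^2 with hb
  have hbsucc : ∀ n, b (n+1) = ‖T (u n)‖^2 := by
    intro n
    show ‖u (n+1)‖^2 = ‖T (u n)‖^2
    rw [husucc]
  have hb_anti : Antitone b := by
    apply antitone_nat_of_succ_le
    intro n
    rw [hbsucc]
    show ‖T (u n)‖^2 ≤ ‖u n‖^2
    have := hTnorm (u n)
    nlinarith [norm_nonneg (T (u n)), norm_nonneg (u n)]
  have hb_bdd : BddBelow (Set.range b) := ⟨0, by rintro r ⟨n, rfl⟩; exact sq_nonneg _⟩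
  have hbL : Tendsto b atTop (𝓝 (⨅ n, b n)) := tendsto_atTop_ciInf hb_anti hb_bdd
  have hbdiff : Tendsto (fun n => b n - b (n+1)) atTop (𝓝 0) := by
    have h2 : Tendsto (fun n => b (n+1)) atTop (𝓝 (⨅ n, b n)) :=
      hbL.comp (tendsto_add_atTop_nat 1)
    simpa using hbL.sub h2
  have hBu_sq : Tendsto (fun n => ‖B (u n)‖^2) atTop (𝓝 0) := by
    apply squeeze_zero (fun n => sq_nonneg _) (fun n => ?_) hbdiff
    calc ‖B (u n)‖^2 ≤ (inner ℝ (B (u n)) (u n) : ℝ) := hBkey (u n)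
      _ = b n - b (n+1) := by rw [hBinner, hbsucc]
  have hBu : Tendsto (fun n => B (u n)) atTop (𝓝 0) := by
    rw [tendsto_zero_iff_norm_tendsto_zero]
    have h1 := hBu_sq.sqrt
    have heq : (fun n => Real.sqrt (‖B (u n)‖^2)) = fun n => ‖B (u n)‖ :=
      funext fun n => Real.sqrt_sq (norm_nonneg _)
    rw [heq] at h1
    simpa using h1
  -- fixed vectors of S∘T are constant
  have hker : ∀ v : Lp ℝ 2 η, B v = 0 → ∃ c : ℝ, v = c • one2 := by
    intro v hv
    have hfixv : S (T v) = v := by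
      have h1 : v - S (T v) = 0 := by rw [← hB_apply v, hv]
      have h2 := sub_eq_zero.mp h1
      exact h2.symm
    have hQfix : Qs (Qt (incl v)) = incl v := by
      rw [← hinclT v, ← hinclS (T v), hfixv]
    obtain ⟨c, hc⟩ := hfix (incl v) (incl_mem2 v) hQfix
    refine ⟨c, Lp.ext ?_⟩
    have h3 : ((incl v : Lp ℝ 1 η) : Z → ℝ) =ᵐ[η] ((c • oneL1 η : Lp ℝ 1 η) : Z → ℝ) := by
      rw [hc]
    filter_upwards [incl_coe v, h3, Lp.coeFn_smul c (oneL1 η), oneL1_coe (η := η),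
      Lp.coeFn_smul c (one2 : Lp ℝ 2 η), one2_coe (η := η)] with z e1 e2 e3 e4 e5 e6
    simp only [Pi.smul_apply, smul_eq_mul] at *
    rw [e5, e6, ← e1, e2, e3, e4]
  -- ψ0 lies in the closure of the range of B
  set K : Submodule ℝ (Lp ℝ 2 η) := LinearMap.range (B : Lp ℝ 2 η →ₗ[ℝ] Lp ℝ 2 η) with hK
  have hψ0K : ψ0 ∈ closure (K : Set (Lp ℝ 2 η)) := by
    have h1 : ψ0 ∈ Kᗮᗮ := by
      rw [Submodule.mem_orthogonal]
      intro v hv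
      rw [Submodule.mem_orthogonal] at hv
      have h2 : (inner ℝ (B v) v : ℝ) = 0 := hv (B v) (LinearMap.mem_range_self _ v)
      have h3 : B v = 0 := by
        have h4 := hBkey v
        rw [h2] at h4
        have h5 : ‖B v‖ = 0 := by nlinarith [norm_nonneg (B v)]
        exact norm_eq_zero.mp h5
      obtain ⟨c, hc⟩ := hker v h3
      rw [hc, real_inner_smul_left, inner_one2_left, hintψ0, mul_zero]
    rw [Submodule.orthogonal_orthogonal_eq_closure] at h1
    rw [← Submodule.topologicalClosure_coe]
    exact h1
  -- the mean-zero inner products tend to 0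
  have hlim0 : Tendsto (fun n => (inner ℝ (u n) ψ0 : ℝ)) atTop (𝓝 0) := by
    rw [Metric.tendsto_atTop]
    intro ε hε
    set M : ℝ := ‖φ0‖ + 1 with hM
    have hM0 : 0 < M := by positivity
    obtain ⟨w, hwK, hwd⟩ := Metric.mem_closure_iff.mp hψ0K (ε/(2*M)) (by positivity)
    rw [SetLike.mem_coe, hK, LinearMap.mem_range] at hwK
    obtain ⟨χ, hχ⟩ := hwK
    have h2 : Tendsto (fun n => (inner ℝ (B (u n)) χ : ℝ)) atTop (𝓝 0) := by
      have h2' : Tendsto (fun n => (inner ℝ (B (u n)) χ : ℝ)) atTop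
          (𝓝 (inner ℝ (0 : Lp ℝ 2 η) χ)) := hBu.inner tendsto_const_nhds
      simpa using h2'
    rw [Metric.tendsto_atTop] at h2
    obtain ⟨N, hN⟩ := h2 (ε/2) (by positivity)
    refine ⟨N, fun n hn => ?_⟩
    have h3 := hN n hn
    rw [Real.dist_eq, sub_zero] at h3 ⊢
    have hsplit : (inner ℝ (u n) ψ0 : ℝ) = inner ℝ (u n) (ψ0 - w) + inner ℝ (B (u n)) χ := by
      have e1 : (inner ℝ (u n) (ψ0 - w) : ℝ) = inner ℝ (u n) ψ0 - inner ℝ (u n) w :=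
        inner_sub_right _ _ _
      have e2 : (inner ℝ (u n) w : ℝ) = inner ℝ (B (u n)) χ := by
        rw [← hχ]
        exact (hBsym (u n) χ).symm
      rw [e1, e2]
      ring
    rw [hsplit]
    have h6 : ‖ψ0 - w‖ < ε/(2*M) := by rw [← dist_eq_norm]; exact hwd
    have h7 : |(inner ℝ (u n) (ψ0 - w) : ℝ)| ≤ M * ‖ψ0 - w‖ := by
      calc |(inner ℝ (u n) (ψ0 - w) : ℝ)| ≤ ‖u n‖ * ‖ψ0 - w‖ := abs_real_inner_le_norm _ _
        _ ≤ M * ‖ψ0 - w‖ := by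
            apply mul_le_mul_of_nonneg_right _ (norm_nonneg _)
            have := hunorm n
            rw [hM]
            linarith
    have h8 : M * ‖ψ0 - w‖ < M * (ε/(2*M)) := by
      exact mul_lt_mul_of_pos_left h6 hM0
    have h9 : M * (ε/(2*M)) = ε/2 := by
      field_simp
    have h5 : |(inner ℝ (u n) (ψ0 - w) : ℝ)| < ε/2 := (h7.trans_lt h8).trans_eq h9
    calc |(inner ℝ (u n) (ψ0 - w) : ℝ) + (inner ℝ (B (u n)) χ : ℝ)|
        ≤ |(inner ℝ (u n) (ψ0 - w) : ℝ)| + |(inner ℝ (B (u n)) χ : ℝ)| := abs_add_le _ _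
      _ < ε/2 + ε/2 := add_lt_add h5 h3
      _ = ε := by ring
  -- decomposition of the inner products
  have hinner_u_one : ∀ n, (inner ℝ (u n) (one2 : Lp ℝ 2 η) : ℝ) = 0 := fun n => by
    rw [inner_one2_right, hint_u]
  have h1' : ∀ n, (inner ℝ (u n) y : ℝ) = inner ℝ (u n) ψ0 := by
    intro n
    have h2 : y - ψ0 = cy • one2 := by rw [hψ0, _root_.sub_sub_cancel]
    have h3 : (inner ℝ (u n) (y - ψ0) : ℝ) = 0 := by
      rw [h2, real_inner_smul_right, hinner_u_one, mul_zero]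
    rw [inner_sub_right] at h3
    linarith
  have hTn : ∀ n, (⇑T)^[n] x = u n + cx • one2 := by
    intro n
    induction n with
    | zero => simp [hu0, hφ0]
    | succ n ih =>
        rw [Function.iterate_succ_apply', ih, map_add, _root_.map_smul, hTone, ← husucc]
  have hdecomp : ∀ n, (inner ℝ ((⇑T)^[n] x) y : ℝ) = (inner ℝ (u n) ψ0 : ℝ) + cx * cy := by
    intro n
    rw [hTn n, inner_add_left, real_inner_smul_left, inner_one2_left, hinty, h1' n]
  -- bridge to Qt^n
  have hbridge : ∀ n, (Qt ^ n) φ = incl ((⇑T)^[n] x) := by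
    intro n
    rw [Module.End.pow_apply]
    induction n with
    | zero => simpa using hinclx.symm
    | succ n ih =>
        rw [Function.iterate_succ_apply', Function.iterate_succ_apply', ih, ← hinclT]
  have hfinal : ∀ n, ∫ z, (((Qt ^ n) φ : Lp ℝ 1 η) : Z → ℝ) z * (ψ : Z → ℝ) z ∂η
      = (inner ℝ ((⇑T)^[n] x) y : ℝ) := by
    intro n
    rw [hbridge n, inner_eq]
    refine integral_congr_ae ?_
    filter_upwards [incl_coe ((⇑T)^[n] x), hyψ] with z e1 e2
    rw [e1, e2]
  have hlim : Tendsto (fun n => (inner ℝ (u n) ψ0 : ℝ) + cx * cy) atTop (𝓝 (0 + cx*cy)) :=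
    hlim0.add tendsto_const_nhds
  rw [zero_add] at hlim
  have heq : (fun n : ℕ => ∫ z, (((Qt ^ n) φ : Lp ℝ 1 η) : Z → ℝ) z * (ψ : Z → ℝ) z ∂η)
      = fun n => (inner ℝ (u n) ψ0 : ℝ) + cx * cy := by
    funext n
    rw [hfinal n, hdecomp n]
  rw [heq]
  exact hlim
end
end

section
/- Let (Z,η) be a Lebesgue probability space and let Q be a measure-preserving Markov operator on L¹(Z,η) such that for some m ≥ 1 every ψ ∈ L²(Z,η) with (Q*)^m Q^m ψ = ψ is a.e. constant. Then Q itself is mixing: for all φ, ψ ∈ L²(Z,η), ∫_Z (Q^n φ)·ψ̄ dη → (∫_Z φ dη)·(∫_Z ψ̄ dη) as n → ∞. -/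
open MeasureTheory Filter ENNReal Topology

noncomputable section

local notation "⟪" x ", " y "⟫" => @inner ℝ _ _ x y



theorem core_tendsto {H : Type*} [NormedAddCommGroup H] [InnerProductSpace ℝ H]
    [CompleteSpace H] (m : ℕ) (T Ts : H →ₗ[ℝ] H) (e : H) (he : e ≠ 0)
    (hadj : ∀ x y : H, ⟪T x, y⟫ = ⟪x, Ts y⟫)
    (hT : ∀ x : H, ‖T x‖ ≤ ‖x‖)
    (hTse : Ts e = e)
    (hfix : ∀ x : H, (Ts ^ m) ((T ^ m) x) = x → ∃ c : ℝ, x = c • e)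
    (φ ψ : H) (hφ : ⟪φ, e⟫ = 0) :
    Tendsto (fun n : ℕ => ⟪(T ^ n) φ, ψ⟫) atTop (𝓝 0) := by
  have hTn : ∀ (n : ℕ) (x : H), ‖(T ^ n) x‖ ≤ ‖x‖ := by
    intro n
    induction n with
    | zero => intro x; simp
    | succ n ih =>
      intro x
      rw [pow_succ, Module.End.mul_apply]
      exact (ih (T x)).trans (hT x)
  have hadjn : ∀ (n : ℕ) (x y : H), ⟪(T ^ n) x, y⟫ = ⟪x, (Ts ^ n) y⟫ := by
    intro n
    induction n with
    | zero => intro x y; simp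
    | succ n ih =>
      intro x y
      rw [pow_succ, Module.End.mul_apply, ih (T x) y, pow_succ', Module.End.mul_apply, hadj]
  have hTsen : ∀ n : ℕ, (Ts ^ n) e = e := by
    intro n; induction n with
    | zero => simp
    | succ n ih => rw [pow_succ, Module.End.mul_apply, hTse, ih]
  -- S
  set S : H →ₗ[ℝ] H := (Ts ^ m) ∘ₗ (T ^ m) with hS
  have hSval : ∀ x y : H, ⟪S x, y⟫ = ⟪(T ^ m) x, (T ^ m) y⟫ := by
    intro x y
    calc ⟪S x, y⟫ = ⟪y, (Ts ^ m) ((T ^ m) x)⟫ := by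
          rw [real_inner_comm]; rfl
      _ = ⟪(T ^ m) y, (T ^ m) x⟫ := (hadjn m y ((T ^ m) x)).symm
      _ = ⟪(T ^ m) x, (T ^ m) y⟫ := real_inner_comm _ _
  have hSsym : ∀ x y : H, ⟪S x, y⟫ = ⟪x, S y⟫ := by
    intro x y
    rw [hSval, real_inner_comm, ← hSval, real_inner_comm]
  have hS0 : ∀ x : H, 0 ≤ ⟪S x, x⟫ := fun x => by
    rw [hSval]; exact real_inner_self_nonneg
  have hSxx : ∀ x : H, ⟪S x, x⟫ = ‖(T ^ m) x‖ ^ 2 := fun x => by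
    rw [hSval, real_inner_self_eq_norm_sq]
  -- lemma H : ‖S x‖^2 ≤ ⟪S x, x⟫
  have hH : ∀ x : H, ‖S x‖ ^ 2 ≤ ⟪S x, x⟫ := by
    intro x
    have h1 : 0 ≤ ⟪S (x - S x), x - S x⟫ := hS0 _
    have h2 : ⟪S (S x), S x⟫ ≤ ‖S x‖ ^ 2 := by
      rw [hSxx]
      have := hTn m (S x)
      nlinarith [norm_nonneg ((T ^ m) (S x)), norm_nonneg (S x)]
    have hexp : ⟪S (x - S x), x - S x⟫
        = ⟪S x, x⟫ - 2 * ‖S x‖ ^ 2 + ⟪S (S x), S x⟫ := by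
      have e1 : ⟪S x, S x⟫ = ‖S x‖ ^ 2 := real_inner_self_eq_norm_sq _
      have e2 : ⟪S (S x), x⟫ = ‖S x‖ ^ 2 := by
        rw [hSsym]; exact real_inner_self_eq_norm_sq _
      simp only [map_sub, inner_sub_left, inner_sub_right]
      rw [e1, e2]; ring
    linarith [hexp ▸ h1]
  -- the sequence
  set v : ℕ → H := fun n => (T ^ n) φ with hv
  have hvbdd : ∀ n, ‖v n‖ ≤ ‖φ‖ := fun n => hTn n φ
  have hve : ∀ n, ⟪v n, e⟫ = 0 := by
    intro n; rw [hv]; simp only; rw [hadjn, hTsen]; exact hφ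
  have hvm : ∀ n, (T ^ m) (v n) = v (n + m) := by
    intro n; simp only [hv]; rw [add_comm, pow_add, Module.End.mul_apply]
  -- norms squared converge
  have hmono : Antitone fun n => ‖v n‖ := by
    apply antitone_nat_of_succ_le
    intro n
    have : v (n + 1) = T (v n) := by
      simp only [hv]; rw [pow_succ', Module.End.mul_apply]
    rw [this]; exact hT _
  obtain ⟨L, hL⟩ : ∃ L, Tendsto (fun n => ‖v n‖) atTop (𝓝 L) :=
    ⟨_, tendsto_atTop_ciInf hmono ⟨0, fun x ⟨n, hn⟩ => hn ▸ norm_nonneg _⟩⟩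
  have hLsq : Tendsto (fun n => ‖v n‖ ^ 2) atTop (𝓝 (L ^ 2)) := hL.pow 2
  have hLsq' : Tendsto (fun n => ‖v (n + m)‖ ^ 2) atTop (𝓝 (L ^ 2)) :=
    hLsq.comp (tendsto_add_atTop_nat m)
  -- almost fixed
  have hkey : ∀ n, ‖S (v n) - v n‖ ^ 2 ≤ ‖v n‖ ^ 2 - ‖v (n + m)‖ ^ 2 := by
    intro n
    have h1 : ‖S (v n) - v n‖ ^ 2
        = ‖S (v n)‖ ^ 2 - 2 * ⟪S (v n), v n⟫ + ‖v n‖ ^ 2 := by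
      rw [← real_inner_self_eq_norm_sq, ← real_inner_self_eq_norm_sq,
        ← real_inner_self_eq_norm_sq]
      simp only [inner_sub_left, inner_sub_right]
      rw [real_inner_comm (v n) (S (v n))]; ring
    have h2 := hH (v n)
    have h3 : ⟪S (v n), v n⟫ = ‖v (n + m)‖ ^ 2 := by rw [hSxx, hvm]
    linarith
  have hSv0 : Tendsto (fun n => ‖S (v n) - v n‖) atTop (𝓝 0) := by
    have hsq : Tendsto (fun n => ‖S (v n) - v n‖ ^ 2) atTop (𝓝 0) := by
      apply squeeze_zero (fun n => by positivity) hkey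
      have := hLsq.sub hLsq'
      simpa using this
    have := hsq.sqrt
    simpa [Real.sqrt_sq (norm_nonneg _)] using this
  -- dense subspace
  set D : Submodule ℝ H := (Submodule.span ℝ {e}) ⊔ LinearMap.range (LinearMap.id - S) with hD
  have hDdense : D.topologicalClosure = ⊤ := by
    rw [Submodule.topologicalClosure_eq_top_iff]
    rw [Submodule.eq_bot_iff]
    intro u hu
    have h1 : ∀ x ∈ D, ⟪x, u⟫ = 0 := fun x hx => (Submodule.mem_orthogonal D u).mp hu x hx
    have he' : ⟪e, u⟫ = 0 := h1 e (Submodule.mem_sup_left (Submodule.mem_span_singleton_self e))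
    have hr : ∀ x : H, ⟪x - S x, u⟫ = 0 := fun x =>
      h1 _ (Submodule.mem_sup_right ⟨x, rfl⟩)
    have hSu : S u = u := by
      have : ∀ x : H, ⟪x, u - S u⟫ = 0 := by
        intro x
        have := hr x
        rw [inner_sub_left] at this
        rw [inner_sub_right, ← hSsym]
        linarith
      have := this (u - S u)
      rw [inner_self_eq_zero] at this
      rw [sub_eq_zero] at this
      exact this.symm
    obtain ⟨c, hc⟩ := hfix u (by
      show (Ts ^ m) ((T ^ m) u) = u
      have : S u = (Ts ^ m) ((T ^ m) u) := rfl
      rw [← this, hSu])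
    have : c * ⟪e, e⟫ = 0 := by
      rw [hc] at he'
      rw [real_inner_comm] at he'
      simpa [inner_smul_left] using he'
    have hee : ⟪e, e⟫ ≠ 0 := fun h => he (inner_self_eq_zero.mp h)
    have hc0 : c = 0 := by
      rcases mul_eq_zero.mp this with h | h
      · exact h
      · exact absurd h hee
    rw [hc, hc0, zero_smul]
  -- final epsilon argument
  rw [Metric.tendsto_atTop]
  intro ε hε
  have hφ1 : (0:ℝ) < ‖φ‖ + 1 := by positivity
  obtain ⟨d, hdD, hdist⟩ : ∃ d ∈ D, ‖ψ - d‖ < ε / (2 * (‖φ‖ + 1)) := by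
    have hψ : ψ ∈ (D.topologicalClosure : Set H) := by rw [hDdense]; trivial
    rw [Submodule.topologicalClosure_coe] at hψ
    rw [Metric.mem_closure_iff] at hψ
    obtain ⟨d, hd, hlt⟩ := hψ (ε / (2 * (‖φ‖ + 1))) (by positivity)
    exact ⟨d, hd, by rwa [dist_eq_norm] at hlt⟩
  obtain ⟨a, ha, w, hw, hadw⟩ := Submodule.mem_sup.mp hdD
  obtain ⟨c, rfl⟩ := Submodule.mem_span_singleton.mp ha
  obtain ⟨x, rfl⟩ := hw
  -- ⟪v n, d⟫ = ⟪v n - S (v n), x⟫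
  have hvd : ∀ n, ⟪v n, d⟫ = ⟪v n - S (v n), x⟫ := by
    intro n
    rw [← hadw]
    rw [inner_add_right, inner_smul_right, hve, mul_zero, zero_add]
    simp only [LinearMap.sub_apply, LinearMap.id_apply]
    rw [inner_sub_right, inner_sub_left, ← hSsym]
  -- choose N
  have h2 : Tendsto (fun n => ‖S (v n) - v n‖ * ‖x‖) atTop (𝓝 0) := by
    simpa using hSv0.mul_const ‖x‖
  obtain ⟨N, hN⟩ := (Metric.tendsto_atTop.mp h2) (ε / 2) (by positivity)
  refine ⟨N, fun n hn => ?_⟩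
  have hb1 : |⟪v n, d⟫| ≤ ‖S (v n) - v n‖ * ‖x‖ := by
    rw [hvd]
    calc |⟪v n - S (v n), x⟫| ≤ ‖v n - S (v n)‖ * ‖x‖ := abs_real_inner_le_norm _ _
      _ = ‖S (v n) - v n‖ * ‖x‖ := by rw [norm_sub_rev]
  have hb2 : |⟪v n, ψ - d⟫| ≤ ‖φ‖ * (ε / (2 * (‖φ‖ + 1))) := by
    calc |⟪v n, ψ - d⟫| ≤ ‖v n‖ * ‖ψ - d‖ := abs_real_inner_le_norm _ _
      _ ≤ ‖φ‖ * (ε / (2 * (‖φ‖ + 1))) := by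
          apply mul_le_mul (hvbdd n) hdist.le (norm_nonneg _) (norm_nonneg _)
  have hsplit : ⟪v n, ψ⟫ = ⟪v n, d⟫ + ⟪v n, ψ - d⟫ := by
    rw [inner_sub_right]; ring
  have hN' : ‖S (v n) - v n‖ * ‖x‖ < ε / 2 := by
    have := hN n hn
    rwa [dist_eq_norm, sub_zero, Real.norm_eq_abs,
      abs_of_nonneg (by positivity : (0:ℝ) ≤ ‖S (v n) - v n‖ * ‖x‖)] at this
  have hlast : ‖φ‖ * (ε / (2 * (‖φ‖ + 1))) < ε / 2 := by
    rw [mul_div_assoc', div_lt_div_iff₀ (by positivity) two_pos]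
    nlinarith [hε, norm_nonneg φ, mul_nonneg (norm_nonneg φ) hε.le]
  rw [dist_eq_norm, sub_zero, Real.norm_eq_abs]
  calc |⟪v n, ψ⟫| ≤ |⟪v n, d⟫| + |⟪v n, ψ - d⟫| := hsplit ▸ abs_add_le _ _
    _ < ε / 2 + ε / 2 := add_lt_add (hb1.trans_lt hN') (hb2.trans_lt hlast)
    _ = ε := by ring
section Markov

variable {Z : Type*} [MeasurableSpace Z] {η : Measure Z} [IsFiniteMeasure η]

lemma oneL1_coe : (oneL1 η : Z → ℝ) =ᵐ[η] fun _ => (1:ℝ) := MemLp.coeFn_toLp _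

lemma markov_sq_le {Q : Lp ℝ 1 η →ₗ[ℝ] Lp ℝ 1 η} (hQ : IsMarkovOp η Q)
    (f : Lp ℝ 1 η) (hf : MemLp (f : Z → ℝ) 2 η) :
    MemLp (Q f : Z → ℝ) 2 η ∧
      ∫ z, ((Q f : Z → ℝ) z) ^ 2 ∂η ≤ ∫ z, ((f : Z → ℝ) z) ^ 2 ∂η := by
  have hsq : Integrable (fun z => (f : Z → ℝ) z ^ 2) η := hf.integrable_sq
  set f2 : Lp ℝ 1 η := (memLp_one_iff_integrable.mpr hsq).toLp _ with hf2def
  have hf2coe : (f2 : Z → ℝ) =ᵐ[η] fun z => (f : Z → ℝ) z ^ 2 := MemLp.coeFn_toLp _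
  -- key positivity for rational t
  have hkey : ∀ t : ℝ, 0 ≤ᵐ[η] fun z =>
      (Q f2 : Z → ℝ) z - 2 * t * (Q f : Z → ℝ) z + t ^ 2 := by
    intro t
    have hpos : (0 : Lp ℝ 1 η) ≤ f2 - (2 * t) • f + t ^ 2 • oneL1 η := by
      rw [← Lp.coeFn_nonneg]
      filter_upwards [Lp.coeFn_add (f2 - (2*t) • f) (t^2 • oneL1 η),
        Lp.coeFn_sub f2 ((2*t) • f), Lp.coeFn_smul (2*t) f,
        Lp.coeFn_smul (t^2) (oneL1 η), hf2coe, oneL1_coe] with z h1 h2 h3 h4 h5 h6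
      simp only [Pi.add_apply, Pi.sub_apply, Pi.smul_apply, Pi.zero_apply,
        smul_eq_mul] at h1 h2 h3 h4 ⊢
      rw [h1, h2, h3, h4, h5, h6]
      have : (f : Z → ℝ) z ^ 2 - 2 * t * (f : Z → ℝ) z + t ^ 2 * 1
          = ((f : Z → ℝ) z - t) ^ 2 := by ring
      rw [this]; positivity
    have hQpos := hQ.1 _ hpos
    have hexp : Q (f2 - (2 * t) • f + t ^ 2 • oneL1 η)
        = Q f2 - (2 * t) • Q f + t ^ 2 • oneL1 η := by
      rw [map_add, map_sub, LinearMap.map_smul, LinearMap.map_smul, hQ.2.1]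
    rw [hexp, ← Lp.coeFn_nonneg] at hQpos
    filter_upwards [hQpos, Lp.coeFn_add (Q f2 - (2*t) • Q f) (t^2 • oneL1 η),
      Lp.coeFn_sub (Q f2) ((2*t) • Q f), Lp.coeFn_smul (2*t) (Q f),
      Lp.coeFn_smul (t^2) (oneL1 η), oneL1_coe] with z h0 h1 h2 h3 h4 h5
    simp only [Pi.add_apply, Pi.sub_apply, Pi.smul_apply, Pi.zero_apply,
      smul_eq_mul] at h0 h1 h2 h3 h4
    rw [h1, h2, h3, h4, h5] at h0
    show (0:ℝ) ≤ _
    linarith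
  have hae : ∀ᵐ z ∂η, ∀ t : ℚ, 0 ≤ (Q f2 : Z → ℝ) z - 2 * (t:ℝ) * (Q f : Z → ℝ) z + (t:ℝ) ^ 2 :=
    ae_all_iff.mpr fun t => hkey (t : ℝ)
  have hptwise : ∀ᵐ z ∂η, ((Q f : Z → ℝ) z) ^ 2 ≤ (Q f2 : Z → ℝ) z := by
    filter_upwards [hae] with z hz
    set b := (Q f : Z → ℝ) z
    set c := (Q f2 : Z → ℝ) z
    have hall : ∀ t : ℝ, 0 ≤ c - 2 * t * b + t ^ 2 := by
      have hclosed : IsClosed {t : ℝ | 0 ≤ c - 2 * t * b + t ^ 2} :=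
        isClosed_le continuous_const (by continuity)
      have hsub : Set.range ((↑) : ℚ → ℝ) ⊆ {t : ℝ | 0 ≤ c - 2 * t * b + t ^ 2} := by
        rintro _ ⟨q, rfl⟩; exact hz q
      have hdense : Dense {t : ℝ | 0 ≤ c - 2 * t * b + t ^ 2} :=
        Rat.denseRange_cast.mono hsub
      have : {t : ℝ | 0 ≤ c - 2 * t * b + t ^ 2} = Set.univ := by
        rw [← hclosed.closure_eq]; exact hdense.closure_eq
      intro t
      have := Set.eq_univ_iff_forall.mp this t
      exact this
    have := hall b
    nlinarith
  have hint2 : Integrable (fun z => ((Q f : Z → ℝ) z) ^ 2) η := by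
    refine Integrable.mono' (L1.integrable_coeFn (Q f2)) ?_ ?_
    · exact (Lp.aestronglyMeasurable (Q f)).pow 2
    · filter_upwards [hptwise] with z hz
      rw [Real.norm_eq_abs, abs_of_nonneg (by positivity)]
      exact hz
  have hmem : MemLp (Q f : Z → ℝ) 2 η :=
    (memLp_two_iff_integrable_sq (Lp.aestronglyMeasurable (Q f))).mpr hint2
  refine ⟨hmem, ?_⟩
  calc ∫ z, ((Q f : Z → ℝ) z) ^ 2 ∂η
      ≤ ∫ z, (Q f2 : Z → ℝ) z ∂η :=
        integral_mono_ae hint2 (L1.integrable_coeFn (Q f2)) hptwise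
    _ = ∫ z, (f2 : Z → ℝ) z ∂η := hQ.2.2 f2
    _ = ∫ z, ((f : Z → ℝ) z) ^ 2 ∂η := integral_congr_ae hf2coe

end Markov

section Glue

variable {Z : Type*} [MeasurableSpace Z] {η : Measure Z} [IsFiniteMeasure η]

/-- Inclusion of `L²` into `L¹`. -/
def incl (g : Lp ℝ 2 η) : Lp ℝ 1 η :=
  ((Lp.memLp g).mono_exponent (by norm_num)).toLp g

lemma incl_coe (g : Lp ℝ 2 η) : (incl g : Z → ℝ) =ᵐ[η] g := MemLp.coeFn_toLp _

lemma incl_inj {g g' : Lp ℝ 2 η} (h : incl g = incl g') : g = g' := by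
  apply Lp.ext
  have h1 := incl_coe g
  have h2 := incl_coe g'
  rw [h] at h1
  exact h1.symm.trans h2

lemma incl_mem2 (g : Lp ℝ 2 η) : MemLp (incl g : Z → ℝ) 2 η :=
  (Lp.memLp g).ae_eq (incl_coe g).symm

lemma incl_add (g g' : Lp ℝ 2 η) : incl (g + g') = incl g + incl g' := by
  apply Lp.ext
  filter_upwards [incl_coe (g + g'), incl_coe g, incl_coe g',
    Lp.coeFn_add g g', Lp.coeFn_add (incl g) (incl g')] with z h1 h2 h3 h4 h5
  rw [h1, h4, h5]
  simp only [Pi.add_apply]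
  rw [h2, h3]

lemma incl_smul (c : ℝ) (g : Lp ℝ 2 η) : incl (c • g) = c • incl g := by
  apply Lp.ext
  filter_upwards [incl_coe (c • g), incl_coe g, Lp.coeFn_smul c g,
    Lp.coeFn_smul c (incl g)] with z h1 h2 h3 h4
  rw [h1, h3, h4]
  simp only [Pi.smul_apply, smul_eq_mul]
  rw [h2]

/-- The constant function `1` in `L²`. -/
def one2 (η : Measure Z) [IsFiniteMeasure η] : Lp ℝ 2 η :=
  MemLp.toLp (fun _ => (1 : ℝ)) (memLp_const 1)

lemma one2_coe : (one2 η : Z → ℝ) =ᵐ[η] fun _ => (1:ℝ) := MemLp.coeFn_toLp _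

lemma incl_one2 : incl (one2 η) = oneL1 η := by
  apply Lp.ext
  exact (incl_coe (one2 η)).trans (one2_coe.trans oneL1_coe.symm)

lemma inner_eq_integral (g h : Lp ℝ 2 η) :
    ⟪g, h⟫ = ∫ z, (g : Z → ℝ) z * (h : Z → ℝ) z ∂η := by
  rw [MeasureTheory.L2.inner_def]
  simp [RCLike.inner_apply]
  exact integral_congr_ae (ae_of_all _ fun z => mul_comm _ _)

/-- Underlying function of the restriction of a Markov operator to `L²`. -/
def markovL2fun (Q : Lp ℝ 1 η →ₗ[ℝ] Lp ℝ 1 η) (hQ : IsMarkovOp η Q) (g : Lp ℝ 2 η) :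
    Lp ℝ 2 η :=
  (markov_sq_le hQ (incl g) (incl_mem2 g)).1.toLp _

lemma markovL2fun_coe (Q : Lp ℝ 1 η →ₗ[ℝ] Lp ℝ 1 η) (hQ : IsMarkovOp η Q) (g : Lp ℝ 2 η) :
    (markovL2fun Q hQ g : Z → ℝ) =ᵐ[η] (Q (incl g) : Z → ℝ) := MemLp.coeFn_toLp _

lemma incl_markovL2fun (Q : Lp ℝ 1 η →ₗ[ℝ] Lp ℝ 1 η) (hQ : IsMarkovOp η Q) (g : Lp ℝ 2 η) :
    incl (markovL2fun Q hQ g) = Q (incl g) := by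
  apply Lp.ext
  exact (incl_coe _).trans (markovL2fun_coe Q hQ g)

/-- Restriction of a Markov operator to `L²`, as a linear map. -/
def markovL2 (Q : Lp ℝ 1 η →ₗ[ℝ] Lp ℝ 1 η) (hQ : IsMarkovOp η Q) :
    Lp ℝ 2 η →ₗ[ℝ] Lp ℝ 2 η where
  toFun := markovL2fun Q hQ
  map_add' g g' := by
    apply incl_inj (η := η)
    rw [incl_markovL2fun, incl_add, incl_add, incl_markovL2fun, incl_markovL2fun, map_add]
  map_smul' c g := by
    apply incl_inj (η := η)
    simp only [RingHom.id_apply]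
    rw [incl_markovL2fun, incl_smul, incl_smul, incl_markovL2fun, LinearMap.map_smul]

lemma incl_markovL2 (Q : Lp ℝ 1 η →ₗ[ℝ] Lp ℝ 1 η) (hQ : IsMarkovOp η Q) (g : Lp ℝ 2 η) :
    incl (markovL2 Q hQ g) = Q (incl g) := incl_markovL2fun Q hQ g

lemma incl_markovL2_pow (Q : Lp ℝ 1 η →ₗ[ℝ] Lp ℝ 1 η) (hQ : IsMarkovOp η Q) (n : ℕ)
    (g : Lp ℝ 2 η) : incl ((markovL2 Q hQ ^ n) g) = (Q ^ n) (incl g) := by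
  induction n with
  | zero => simp
  | succ n ih =>
    rw [pow_succ', Module.End.mul_apply, pow_succ', Module.End.mul_apply,
      incl_markovL2, ih]

lemma markovL2_coe (Q : Lp ℝ 1 η →ₗ[ℝ] Lp ℝ 1 η) (hQ : IsMarkovOp η Q) (g : Lp ℝ 2 η) :
    (markovL2 Q hQ g : Z → ℝ) =ᵐ[η] (Q (incl g) : Z → ℝ) := markovL2fun_coe Q hQ g

lemma markovL2_norm_le (Q : Lp ℝ 1 η →ₗ[ℝ] Lp ℝ 1 η) (hQ : IsMarkovOp η Q)
    (g : Lp ℝ 2 η) : ‖markovL2 Q hQ g‖ ≤ ‖g‖ := by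
  have h1 : ⟪markovL2 Q hQ g, markovL2 Q hQ g⟫
      = ∫ z, ((Q (incl g) : Z → ℝ) z) ^ 2 ∂η := by
    rw [inner_eq_integral]
    apply integral_congr_ae
    filter_upwards [markovL2_coe Q hQ g] with z hz
    rw [hz]; ring
  have h2 : ⟪g, g⟫ = ∫ z, ((incl g : Z → ℝ) z) ^ 2 ∂η := by
    rw [inner_eq_integral]
    apply integral_congr_ae
    filter_upwards [incl_coe g] with z hz
    rw [← hz]; ring
  have h3 := (markov_sq_le hQ (incl g) (incl_mem2 g)).2
  have h4 : ‖markovL2 Q hQ g‖ ^ 2 ≤ ‖g‖ ^ 2 := by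
    rw [← real_inner_self_eq_norm_sq, ← real_inner_self_eq_norm_sq, h1, h2]
    exact h3
  have := Real.sqrt_le_sqrt (by exact_mod_cast h4)
  rwa [Real.sqrt_sq (norm_nonneg _), Real.sqrt_sq (norm_nonneg _)] at this

end Glue

/-- If `Q` is a measure-preserving Markov operator on `L¹(Z,η)` of a Lebesgue
probability space such that for some `m ≥ 1` every `ψ ∈ L²` with `(Q*)^m Q^m ψ = ψ` is a.e.
constant, then `Q` is mixing. -/
theorem statement2
    {Z : Type*} [MeasurableSpace Z] [StandardBorelSpace Z]
    (η : Measure Z) [IsProbabilityMeasure η]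
    (Q Qs : Lp ℝ 1 η →ₗ[ℝ] Lp ℝ 1 η)
    (hQ : IsMarkovOp η Q) (hQs : IsMarkovOp η Qs) (hadj : MarkovAdjoint η Q Qs)
    (hfix : ∃ m : ℕ, 1 ≤ m ∧ ∀ ψ : Lp ℝ 1 η, MemLp (ψ : Z → ℝ) 2 η →
      (Qs ^ m) ((Q ^ m) ψ) = ψ → ∃ c : ℝ, ψ = c • oneL1 η) :
    ∀ φ ψ : Lp ℝ 1 η, MemLp (φ : Z → ℝ) 2 η → MemLp (ψ : Z → ℝ) 2 η →
      Tendsto (fun n : ℕ => ∫ z, ((Q ^ n) φ : Z → ℝ) z * (ψ : Z → ℝ) z ∂η) atTop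
        (𝓝 ((∫ z, (φ : Z → ℝ) z ∂η) * ∫ z, (ψ : Z → ℝ) z ∂η)) := by
  obtain ⟨m, hm1, hfixm⟩ := hfix
  intro φ ψ hφ2 hψ2
  set T := markovL2 Q hQ with hTdef
  set Ts := markovL2 Qs hQs with hTsdef
  set e : Lp ℝ 2 η := one2 η with hedef
  -- basics on e
  have hee : ⟪e, e⟫ = 1 := by
    rw [inner_eq_integral]
    have : ∫ z, (e : Z → ℝ) z * (e : Z → ℝ) z ∂η = ∫ z, (1:ℝ) ∂η := by
      apply integral_congr_ae
      filter_upwards [one2_coe (η := η)] with z hz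
      rw [hedef] at *
      rw [hz]; ring
    rw [this]
    simp
  have he0 : e ≠ 0 := by
    intro h
    rw [h] at hee
    simp at hee
  -- adjoint relation on L²
  have hadj2 : ∀ x y : Lp ℝ 2 η, ⟪T x, y⟫ = ⟪x, Ts y⟫ := by
    intro x y
    rw [inner_eq_integral, inner_eq_integral]
    have h1 : ∫ z, (T x : Z → ℝ) z * (y : Z → ℝ) z ∂η
        = ∫ z, (Q (incl x) : Z → ℝ) z * (incl y : Z → ℝ) z ∂η := by
      apply integral_congr_ae
      filter_upwards [markovL2_coe Q hQ x, incl_coe y] with z ha hb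
      rw [ha, hb]
    have h2 : ∫ z, (x : Z → ℝ) z * (Ts y : Z → ℝ) z ∂η
        = ∫ z, (incl x : Z → ℝ) z * (Qs (incl y) : Z → ℝ) z ∂η := by
      apply integral_congr_ae
      filter_upwards [markovL2_coe Qs hQs y, incl_coe x] with z ha hb
      rw [ha, hb]
    rw [h1, h2]
    exact hadj (incl x) (incl y) (incl_mem2 x) (incl_mem2 y)
  -- contraction
  have hTnorm : ∀ x : Lp ℝ 2 η, ‖T x‖ ≤ ‖x‖ := markovL2_norm_le Q hQ
  -- Ts fixes e
  have hTse : Ts e = e := by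
    apply incl_inj (η := η)
    rw [incl_markovL2, incl_one2, hQs.2.1]
  have hTe : T e = e := by
    apply incl_inj (η := η)
    rw [incl_markovL2, incl_one2, hQ.2.1]
  -- fixed points
  have hfix2 : ∀ x : Lp ℝ 2 η, (Ts ^ m) ((T ^ m) x) = x → ∃ c : ℝ, x = c • e := by
    intro x hx
    have hmem : MemLp (incl x : Z → ℝ) 2 η := incl_mem2 x
    have heq : (Qs ^ m) ((Q ^ m) (incl x)) = incl x := by
      rw [← incl_markovL2_pow Q hQ m x, ← incl_markovL2_pow Qs hQs m, hx]
    obtain ⟨c, hc⟩ := hfixm (incl x) hmem heq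
    refine ⟨c, ?_⟩
    apply incl_inj (η := η)
    rw [hc, incl_smul, incl_one2]
  -- lift φ ψ to L²
  set φ₂ : Lp ℝ 2 η := hφ2.toLp _ with hφ₂def
  set ψ₂ : Lp ℝ 2 η := hψ2.toLp _ with hψ₂def
  have hφ₂coe : (φ₂ : Z → ℝ) =ᵐ[η] (φ : Z → ℝ) := MemLp.coeFn_toLp _
  have hψ₂coe : (ψ₂ : Z → ℝ) =ᵐ[η] (ψ : Z → ℝ) := MemLp.coeFn_toLp _
  have hinclφ : incl φ₂ = φ := Lp.ext ((incl_coe φ₂).trans hφ₂coe)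
  have hinclψ : incl ψ₂ = ψ := Lp.ext ((incl_coe ψ₂).trans hψ₂coe)
  set Iφ : ℝ := ∫ z, (φ : Z → ℝ) z ∂η with hIφ
  set Iψ : ℝ := ∫ z, (ψ : Z → ℝ) z ∂η with hIψ
  have hφ₂e : ⟪φ₂, e⟫ = Iφ := by
    rw [inner_eq_integral]
    rw [hIφ]
    apply integral_congr_ae
    filter_upwards [hφ₂coe, one2_coe (η := η)] with z h1 h2
    rw [hedef] at *
    rw [h1, h2, mul_one]
  have hψ₂e : ⟪e, ψ₂⟫ = Iψ := by
    rw [inner_eq_integral, hIψ]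
    apply integral_congr_ae
    filter_upwards [hψ₂coe, one2_coe (η := η)] with z h1 h2
    rw [hedef] at *
    rw [h1, h2, one_mul]
  set φ₀ : Lp ℝ 2 η := φ₂ - Iφ • e with hφ₀def
  have hφ₀e : ⟪φ₀, e⟫ = 0 := by
    rw [hφ₀def, inner_sub_left, inner_smul_left, hφ₂e, hee]
    simp [hee]
  -- the core convergence
  have hcore := core_tendsto m T Ts e he0 hadj2 hTnorm hTse hfix2 φ₀ ψ₂ hφ₀e
  -- T^n e = e
  have hTne : ∀ n : ℕ, (T ^ n) e = e := by
    intro n; induction n with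
    | zero => simp
    | succ n ih => rw [pow_succ', Module.End.mul_apply, ih]; exact hTe
  -- rewrite the integral
  have hint : ∀ n : ℕ, ∫ z, ((Q ^ n) φ : Z → ℝ) z * (ψ : Z → ℝ) z ∂η
      = ⟪(T ^ n) φ₀, ψ₂⟫ + Iφ * Iψ := by
    intro n
    have h1 : (Q ^ n) φ = incl ((T ^ n) φ₂) := by
      rw [incl_markovL2_pow Q hQ n φ₂, hinclφ]
    have h2 : ∫ z, ((Q ^ n) φ : Z → ℝ) z * (ψ : Z → ℝ) z ∂η = ⟪(T ^ n) φ₂, ψ₂⟫ := by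
      rw [inner_eq_integral]
      apply integral_congr_ae
      have hcoe : ((Q ^ n) φ : Z → ℝ) =ᵐ[η] ((T ^ n) φ₂ : Z → ℝ) := by
        rw [h1]; exact incl_coe _
      filter_upwards [hcoe, hψ₂coe] with z ha hb
      rw [ha, hb]
    rw [h2]
    have h3 : (T ^ n) φ₂ = (T ^ n) φ₀ + Iφ • e := by
      rw [hφ₀def, map_sub, LinearMap.map_smul, hTne, sub_add_cancel]
    rw [h3, inner_add_left, inner_smul_left]
    rw [hψ₂e]
    simp
  have : (fun n : ℕ => ∫ z, ((Q ^ n) φ : Z → ℝ) z * (ψ : Z → ℝ) z ∂η)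
      = fun n : ℕ => ⟪(T ^ n) φ₀, ψ₂⟫ + Iφ * Iψ := funext hint
  rw [this]
  have := hcore.add_const (Iφ * Iψ)
  rwa [zero_add] at this
end
end

section
/- Let Z be a standard Borel space, (κ_n)_{n≥0} a sequence of Markov kernels from Z to Z, μ₀ a probability measure on Z, and let ℙ be the probability measure on Z^ℕ (Ionescu–Tulcea measure) determined by ℙ(z₀ ∈ A₀, z₁ ∈ A₁, …, z_n ∈ A_n) = ∫_{A₀} μ₀(dz₀) ∫_{A₁} κ₀(z₀, dz₁) ⋯ ∫_{A_n} κ_{n−1}(z_{n−1}, dz_n) for all n and all measurable A₀, …, A_n ⊆ Z. Set F_tail = ⋂_{n≥0} σ(z_m : m ≥ n), F_tail,even = ⋂_{n≥0} σ(z_{2k} : k ≥ n), and F_tail,odd = ⋂_{n≥0} σ(z_{2k+1} : k ≥ n). Then for every A ∈ F_tail there exist B ∈ F_tail,even and B′ ∈ F_tail,odd with ℙ(A Δ B) = 0 and ℙ(A Δ B′) = 0. Consequently, F_tail is ℙ-trivial if and only if F_tail,even is ℙ-trivial, if and only if F_tail,odd is ℙ-trivial. -/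
open MeasureTheory Filter ENNReal Topology ProbabilityTheory

noncomputable section

/-- `chainProbSeq κ n [A₁,…,Aₖ] z = ∫_{A₁} κ_n(z,dz₁) ∫_{A₂} κ_{n+1}(z₁,dz₂) ⋯`. -/
def chainProbSeq {Z : Type*} [MeasurableSpace Z] (κ : ℕ → Kernel Z Z) :
    ℕ → List (Set Z) → Z → ℝ≥0∞
  | _, [], _ => 1
  | n, A :: rest, z => ∫⁻ y in A, chainProbSeq κ (n + 1) rest y ∂(κ n z)

/-- The σ-algebra `σ(z_m : m ≥ n)` on `Z^ℕ`. -/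
def fromSA (Z : Type*) [MeasurableSpace Z] (n : ℕ) : MeasurableSpace (ℕ → Z) :=
  ⨆ m : ℕ, ⨆ _ : n ≤ m, MeasurableSpace.comap (fun ω : ℕ → Z => ω m) inferInstance

namespace S5

variable {Z : Type*} [MeasurableSpace Z]

/-- iterated kernel integral ending with `f`. -/
def chainInt (κ : ℕ → Kernel Z Z) : ℕ → List (Set Z) → (Z → ℝ≥0∞) → Z → ℝ≥0∞
  | _, [], f, z => f z
  | n, A :: rest, f, z => ∫⁻ y in A, chainInt κ (n + 1) rest f y ∂(κ n z)

lemma chainInt_one (κ : ℕ → Kernel Z Z) :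
    ∀ (L : List (Set Z)) (n : ℕ) (z : Z), chainInt κ n L (fun _ => 1) z = chainProbSeq κ n L z
  | [], n, z => rfl
  | A :: rest, n, z => by
      simp only [chainInt, chainProbSeq]
      exact lintegral_congr fun y => chainInt_one κ rest (n+1) y

lemma measurable_chainInt (κ : ℕ → Kernel Z Z) [∀ n, IsMarkovKernel (κ n)]
    {f : Z → ℝ≥0∞} (hf : Measurable f) :
    ∀ (L : List (Set Z)) (n : ℕ), (∀ A ∈ L, MeasurableSet A) → Measurable (chainInt κ n L f)
  | [], n, _ => hf
  | A :: rest, n, hL => by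
      have ih := measurable_chainInt κ hf rest (n+1) (fun B hB => hL B (List.mem_cons_of_mem _ hB))
      exact Measurable.setLIntegral_kernel ih (hL A List.mem_cons_self)

lemma chainInt_mono (κ : ℕ → Kernel Z Z) {f g : Z → ℝ≥0∞} (hfg : ∀ z, f z ≤ g z) :
    ∀ (L : List (Set Z)) (n : ℕ) (z : Z), chainInt κ n L f z ≤ chainInt κ n L g z
  | [], n, z => hfg z
  | A :: rest, n, z => by
      simp only [chainInt]
      exact lintegral_mono fun y => chainInt_mono κ hfg rest (n+1) y

lemma chainInt_add (κ : ℕ → Kernel Z Z) [∀ n, IsMarkovKernel (κ n)]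
    {f g : Z → ℝ≥0∞} (hf : Measurable f) (hg : Measurable g) :
    ∀ (L : List (Set Z)) (n : ℕ), (∀ A ∈ L, MeasurableSet A) → ∀ z,
      chainInt κ n L (fun y => f y + g y) z = chainInt κ n L f z + chainInt κ n L g z
  | [], n, _, z => rfl
  | A :: rest, n, hL, z => by
      simp only [chainInt]
      rw [← lintegral_add_left (measurable_chainInt κ hf rest (n+1)
        (fun B hB => hL B (List.mem_cons_of_mem _ hB)))]
      exact lintegral_congr fun y =>
        chainInt_add κ hf hg rest (n+1) (fun B hB => hL B (List.mem_cons_of_mem _ hB)) y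

lemma chainInt_const_mul (κ : ℕ → Kernel Z Z) [∀ n, IsMarkovKernel (κ n)]
    {f : Z → ℝ≥0∞} (hf : Measurable f) (c : ℝ≥0∞) :
    ∀ (L : List (Set Z)) (n : ℕ), (∀ A ∈ L, MeasurableSet A) → ∀ z,
      chainInt κ n L (fun y => c * f y) z = c * chainInt κ n L f z
  | [], n, _, z => rfl
  | A :: rest, n, hL, z => by
      simp only [chainInt]
      rw [← lintegral_const_mul c (measurable_chainInt κ hf rest (n+1)
        (fun B hB => hL B (List.mem_cons_of_mem _ hB)))]
      exact lintegral_congr fun y =>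
        chainInt_const_mul κ hf c rest (n+1) (fun B hB => hL B (List.mem_cons_of_mem _ hB)) y

lemma chainInt_iSup (κ : ℕ → Kernel Z Z) [∀ n, IsMarkovKernel (κ n)]
    {f : ℕ → Z → ℝ≥0∞} (hf : ∀ i, Measurable (f i)) (hmono : Monotone f) :
    ∀ (L : List (Set Z)) (n : ℕ), (∀ A ∈ L, MeasurableSet A) → ∀ z,
      chainInt κ n L (fun y => ⨆ i, f i y) z = ⨆ i, chainInt κ n L (f i) z
  | [], n, _, z => rfl
  | A :: rest, n, hL, z => by
      have hL' : ∀ B ∈ rest, MeasurableSet B := fun B hB => hL B (List.mem_cons_of_mem _ hB)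
      simp only [chainInt]
      rw [← lintegral_iSup' (fun i => ((measurable_chainInt κ (hf i) rest (n+1) hL')).aemeasurable)
        (Filter.Eventually.of_forall fun y => fun i j hij =>
          chainInt_mono κ (fun w => hmono hij w) rest (n+1) y)]
      exact lintegral_congr fun y => chainInt_iSup κ hf hmono rest (n+1) hL' y

lemma chainInt_append (κ : ℕ → Kernel Z Z) (f : Z → ℝ≥0∞) (L₂ : List (Set Z)) :
    ∀ (L₁ : List (Set Z)) (n : ℕ) (z : Z),
      chainInt κ n (L₁ ++ L₂) f z = chainInt κ n L₁ (chainInt κ (n + L₁.length) L₂ f) z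
  | [], n, z => by simp [chainInt]
  | A :: rest, n, z => by
      simp only [List.cons_append, chainInt, List.length_cons]
      have h : n + (rest.length + 1) = (n + 1) + rest.length := by omega
      rw [h]
      exact lintegral_congr fun y => chainInt_append κ f L₂ rest (n+1) y

lemma chainInt_indicator (κ : ℕ → Kernel Z Z) (f : Z → ℝ≥0∞) {S : Set Z}
    (hS : MeasurableSet S) (T : Set Z) :
    ∀ (M : List (Set Z)) (n : ℕ) (z : Z),
      chainInt κ n (M ++ [T]) (S.indicator f) z = chainInt κ n (M ++ [T ∩ S]) f z
  | [], n, z => by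
      simp only [List.nil_append, chainInt]
      rw [lintegral_indicator hS, Measure.restrict_restrict hS, Set.inter_comm]
  | A :: rest, n, z => by
      simp only [List.cons_append, chainInt]
      exact lintegral_congr fun y => chainInt_indicator κ f hS T rest (n+1) y


/-- coordinate constraints from offset `off`. -/
def QQ (ω : ℕ → Z) (off : ℕ) (L : List (Set Z)) : Prop :=
  ∀ i : Fin L.length, ω (off + (i : ℕ)) ∈ L.get i

omit [MeasurableSpace Z] in
lemma QQ_nil (ω : ℕ → Z) (off : ℕ) : QQ ω off ([] : List (Set Z)) := fun i => i.elim0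

omit [MeasurableSpace Z] in
lemma QQ_cons {ω : ℕ → Z} {off : ℕ} {A : Set Z} {L : List (Set Z)} :
    QQ ω off (A :: L) ↔ ω off ∈ A ∧ QQ ω (off + 1) L := by
  constructor
  · intro h
    refine ⟨by simpa using h ⟨0, Nat.succ_pos _⟩, fun i => ?_⟩
    have := h ⟨(i : ℕ) + 1, by simpa using i.isLt⟩
    simpa [show off + ((i : ℕ) + 1) = off + 1 + (i : ℕ) by omega] using this
  · rintro ⟨h0, h⟩ i
    match i with
    | ⟨0, _⟩ => simpa using h0
    | ⟨j + 1, hj⟩ =>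
      have := h ⟨j, by simpa using hj⟩
      simpa [show off + 1 + j = off + (j + 1) by omega] using this

omit [MeasurableSpace Z] in
lemma QQ_append {ω : ℕ → Z} {L₁ L₂ : List (Set Z)} :
    ∀ {off : ℕ}, QQ ω off (L₁ ++ L₂) ↔ QQ ω off L₁ ∧ QQ ω (off + L₁.length) L₂ := by
  induction L₁ with
  | nil =>
    intro off; simp only [List.nil_append, List.length_nil, Nat.add_zero]
    exact ⟨fun h => ⟨QQ_nil ω off, h⟩, fun h => h.2⟩
  | cons A L ih =>
    intro off
    simp only [List.cons_append, QQ_cons, ih, List.length_cons]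
    rw [show off + (L.length + 1) = off + 1 + L.length by omega]
    tauto

omit [MeasurableSpace Z] in
lemma QQ_replicate_univ (ω : ℕ → Z) (off k : ℕ) :
    QQ ω off (List.replicate k (Set.univ : Set Z)) := by
  intro i; simp

omit [MeasurableSpace Z] in
lemma QQ_singleton {ω : ℕ → Z} {off : ℕ} {A : Set Z} :
    QQ ω off ([A]) ↔ ω off ∈ A := by
  rw [QQ_cons]; exact ⟨fun h => h.1, fun h => ⟨h, QQ_nil ω _⟩⟩

/-- cylinder on coordinates `0..L.length`. -/
def cyl (A₀ : Set Z) (L : List (Set Z)) : Set (ℕ → Z) := {ω | ω 0 ∈ A₀ ∧ QQ ω 1 L}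

/-- cylinder on coordinates `m..m+L.length`. -/
def fcyl (m : ℕ) (S : Set Z) (L : List (Set Z)) : Set (ℕ → Z) := {ω | ω m ∈ S ∧ QQ ω (m+1) L}

omit [MeasurableSpace Z] in
lemma cyl_inter_fcyl_nil (A₀ S : Set Z) (L' : List (Set Z)) :
    cyl A₀ ([]) ∩ fcyl 0 S L' = cyl (A₀ ∩ S) L' := by
  ext ω
  simp only [cyl, fcyl, Set.mem_inter_iff, Set.mem_setOf_eq]
  constructor
  · rintro ⟨⟨h0, -⟩, hS, hQ⟩; exact ⟨⟨h0, hS⟩, hQ⟩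
  · rintro ⟨⟨h0, hS⟩, hQ⟩; exact ⟨⟨h0, QQ_nil ω 1⟩, hS, hQ⟩

omit [MeasurableSpace Z] in
lemma cyl_inter_fcyl_concat (A₀ S T : Set Z) (M L' : List (Set Z)) :
    cyl A₀ (M ++ [T]) ∩ fcyl (M.length + 1) S L' = cyl A₀ (M ++ (T ∩ S) :: L') := by
  ext ω
  simp only [cyl, fcyl, Set.mem_inter_iff, Set.mem_setOf_eq, QQ_append, QQ_cons, QQ_singleton]
  rw [show (1 : ℕ) + M.length = M.length + 1 by omega]
  constructor
  · rintro ⟨⟨h0, hM, hT, -⟩, hS, hQ⟩; exact ⟨h0, hM, ⟨hT, hS⟩, hQ⟩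
  · rintro ⟨h0, hM, ⟨hT, hS⟩, hQ⟩; exact ⟨⟨h0, hM, hT, QQ_nil ω _⟩, hS, hQ⟩

omit [MeasurableSpace Z] in
lemma fcyl_nil (m : ℕ) (S : Set Z) : fcyl m S ([]) = (fun ω : ℕ → Z => ω m) ⁻¹' S := by
  ext ω; simp [fcyl, QQ_nil]

omit [MeasurableSpace Z] in
lemma fcyl_pad (m k : ℕ) (S : Set Z) (L : List (Set Z)) :
    fcyl m S L = fcyl m S (L ++ List.replicate k Set.univ) := by
  ext ω
  simp only [fcyl, Set.mem_setOf_eq, QQ_append]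
  exact ⟨fun h => ⟨h.1, h.2, QQ_replicate_univ ω _ _⟩, fun h => ⟨h.1, h.2.1⟩⟩

omit [MeasurableSpace Z] in
lemma QQ_zipWith_inter {ω : ℕ → Z} :
    ∀ (L L' : List (Set Z)) (off : ℕ), L.length = L'.length →
      (QQ ω off (List.zipWith (· ∩ ·) L L') ↔ QQ ω off L ∧ QQ ω off L')
  | [], [], off, _ => by
      simp only [List.zipWith_nil_right]
      exact ⟨fun h => ⟨h, QQ_nil ω off⟩, fun h => h.1⟩
  | [], B :: L', off, h => by simp at h
  | A :: L, [], off, h => by simp at h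
  | A :: L, B :: L', off, h => by
      simp only [List.zipWith_cons_cons, QQ_cons]
      rw [QQ_zipWith_inter L L' (off + 1) (by simpa using h)]
      constructor
      · rintro ⟨⟨h1, h2⟩, h3, h4⟩; exact ⟨⟨h1, h3⟩, h2, h4⟩
      · rintro ⟨⟨h1, h3⟩, h2, h4⟩; exact ⟨⟨h1, h2⟩, h3, h4⟩


/-- `σ(z_0,…,z_m)`. -/
def FF (Z : Type*) [MeasurableSpace Z] (m : ℕ) : MeasurableSpace (ℕ → Z) :=
  ⨆ j : ℕ, ⨆ _ : j ≤ m, MeasurableSpace.comap (fun ω : ℕ → Z => ω j) inferInstance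

lemma comap_le_FF {j m : ℕ} (hj : j ≤ m) :
    MeasurableSpace.comap (fun ω : ℕ → Z => ω j) inferInstance ≤ FF Z m :=
  le_iSup_of_le j (le_iSup_of_le hj le_rfl)

lemma comap_le_fromSA {j m : ℕ} (hj : m ≤ j) :
    MeasurableSpace.comap (fun ω : ℕ → Z => ω j) inferInstance ≤ fromSA Z m :=
  le_iSup_of_le j (le_iSup_of_le hj le_rfl)

lemma FF_le_pi (m : ℕ) : FF Z m ≤ (inferInstance : MeasurableSpace (ℕ → Z)) :=
  iSup_le fun j => iSup_le fun _ => (measurable_pi_apply j).comap_le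

lemma fromSA_le_pi (m : ℕ) : fromSA Z m ≤ (inferInstance : MeasurableSpace (ℕ → Z)) :=
  iSup_le fun j => iSup_le fun _ => (measurable_pi_apply j).comap_le

lemma FF_mono : Monotone (FF Z) := fun a b hab =>
  iSup_le fun j => iSup_le fun hj => comap_le_FF (hj.trans hab)

lemma iSup_FF : (⨆ m, FF Z m) = (inferInstance : MeasurableSpace (ℕ → Z)) := by
  refine le_antisymm (iSup_le fun m => FF_le_pi m) (iSup_le fun j => ?_)
  exact le_iSup_of_le j (comap_le_FF le_rfl)

lemma measurableSet_preimage_of_comap_le {X : MeasurableSpace (ℕ → Z)} {j : ℕ}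
    (h : MeasurableSpace.comap (fun ω : ℕ → Z => ω j) inferInstance ≤ X)
    {B : Set Z} (hB : MeasurableSet B) :
    MeasurableSet[X] ((fun ω : ℕ → Z => ω j) ⁻¹' B) :=
  h _ ⟨B, hB, rfl⟩

lemma cyl_eq_inter (A₀ : Set Z) (L : List (Set Z)) :
    cyl A₀ L = (fun ω : ℕ → Z => ω 0) ⁻¹' A₀ ∩
      ⋂ i : Fin L.length, (fun ω : ℕ → Z => ω (1 + (i : ℕ))) ⁻¹' (L.get i) := by
  ext ω; simp [cyl, QQ, Set.mem_iInter]

lemma fcyl_eq_inter (m : ℕ) (S : Set Z) (L : List (Set Z)) :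
    fcyl m S L = (fun ω : ℕ → Z => ω m) ⁻¹' S ∩
      ⋂ i : Fin L.length, (fun ω : ℕ → Z => ω (m + 1 + (i : ℕ))) ⁻¹' (L.get i) := by
  ext ω; simp [fcyl, QQ, Set.mem_iInter]

lemma measurableSet_cyl_FF {m : ℕ} {A₀ : Set Z} {L : List (Set Z)} (hA₀ : MeasurableSet A₀)
    (hL : ∀ B ∈ L, MeasurableSet B) (hlen : L.length ≤ m) :
    MeasurableSet[FF Z m] (cyl A₀ L) := by
  rw [cyl_eq_inter]
  refine MeasurableSet.inter
    (measurableSet_preimage_of_comap_le (comap_le_FF (Nat.zero_le m)) hA₀)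
    (MeasurableSet.iInter fun i => ?_)
  exact measurableSet_preimage_of_comap_le
    (comap_le_FF (by have := i.isLt; omega)) (hL _ (L.get_mem _))

lemma measurableSet_cyl {A₀ : Set Z} {L : List (Set Z)} (hA₀ : MeasurableSet A₀)
    (hL : ∀ B ∈ L, MeasurableSet B) : MeasurableSet (cyl A₀ L) :=
  FF_le_pi L.length _ (measurableSet_cyl_FF hA₀ hL le_rfl)

lemma measurableSet_fcyl_fromSA {m : ℕ} {S : Set Z} {L : List (Set Z)} (hS : MeasurableSet S)
    (hL : ∀ B ∈ L, MeasurableSet B) :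
    MeasurableSet[fromSA Z m] (fcyl m S L) := by
  rw [fcyl_eq_inter]
  refine MeasurableSet.inter
    (measurableSet_preimage_of_comap_le (comap_le_fromSA le_rfl) hS)
    (MeasurableSet.iInter fun i => ?_)
  exact measurableSet_preimage_of_comap_le
    (comap_le_fromSA (by omega)) (hL _ (L.get_mem _))

lemma QQ_set_replicate {ω : ℕ → Z} {off r k : ℕ} (hk : k < r) (B : Set Z) :
    QQ ω off ((List.replicate r (Set.univ : Set Z)).set k B) ↔ ω (off + k) ∈ B := by
  constructor
  · intro h
    have := h ⟨k, by simpa using hk⟩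
    simpa using this
  · intro hB i
    have hget : ((List.replicate r (Set.univ : Set Z)).set k B).get i
        = if k = (i : ℕ) then B else Set.univ := by
      simp [List.get_eq_getElem, List.getElem_set]
    rw [hget]
    rcases eq_or_ne k (i : ℕ) with h | h
    · rw [if_pos h]; rw [← h]; exact hB
    · rw [if_neg h]; trivial

/-- the π-system generating `FF m`. -/
def sC (Z : Type*) [MeasurableSpace Z] (m : ℕ) : Set (Set (ℕ → Z)) :=
  {C | ∃ A₀ L, MeasurableSet A₀ ∧ (∀ B ∈ L, MeasurableSet B) ∧ L.length = m ∧ C = cyl A₀ L}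

/-- the π-system generating `fromSA m`. -/
def sF (Z : Type*) [MeasurableSpace Z] (m : ℕ) : Set (Set (ℕ → Z)) :=
  {A | ∃ S L, MeasurableSet S ∧ (∀ B ∈ L, MeasurableSet B) ∧ A = fcyl m S L}

lemma FF_eq_generateFrom (m : ℕ) : FF Z m = MeasurableSpace.generateFrom (sC Z m) := by
  refine le_antisymm (iSup_le fun j => iSup_le fun hj s hs => ?_)
    (MeasurableSpace.generateFrom_le ?_)
  · obtain ⟨B, hB, rfl⟩ := hs
    apply MeasurableSpace.measurableSet_generateFrom
    rcases Nat.eq_zero_or_pos j with hj0 | hjpos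
    · subst hj0
      refine ⟨B, List.replicate m Set.univ, hB, ?_, by simp, ?_⟩
      · intro C hC; rw [List.eq_of_mem_replicate hC]; exact MeasurableSet.univ
      · ext ω; simp [cyl, QQ_replicate_univ ω 1 m]
    · obtain ⟨k, rfl⟩ : ∃ k, j = k + 1 := ⟨j - 1, by omega⟩
      refine ⟨Set.univ, (List.replicate m (Set.univ : Set Z)).set k B, MeasurableSet.univ,
        ?_, by simp, ?_⟩
      · intro C hC
        rcases List.mem_or_eq_of_mem_set hC with h | h
        · rw [List.eq_of_mem_replicate h]; exact MeasurableSet.univ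
        · rw [h]; exact hB
      · ext ω
        simp only [cyl, Set.mem_preimage, Set.mem_setOf_eq, Set.mem_univ, true_and]
        rw [QQ_set_replicate (by omega) B]
        rw [show 1 + k = k + 1 by omega]
  · rintro C ⟨A₀, L, hA₀, hL, hlen, rfl⟩
    exact measurableSet_cyl_FF hA₀ hL hlen.le

lemma fromSA_eq_generateFrom (m : ℕ) : fromSA Z m = MeasurableSpace.generateFrom (sF Z m) := by
  refine le_antisymm (iSup_le fun j => iSup_le fun hj s hs => ?_)
    (MeasurableSpace.generateFrom_le ?_)
  · obtain ⟨B, hB, rfl⟩ := hs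
    apply MeasurableSpace.measurableSet_generateFrom
    rcases eq_or_lt_of_le hj with hj0 | hjpos
    · subst hj0
      refine ⟨B, ([] : List (Set Z)), hB, by simp, ?_⟩
      ext ω; simp [fcyl, QQ_nil ω]
    · obtain ⟨k, rfl⟩ : ∃ k, j = m + 1 + k := ⟨j - m - 1, by omega⟩
      refine ⟨Set.univ, (List.replicate (k+1) (Set.univ : Set Z)).set k B,
        MeasurableSet.univ, ?_, ?_⟩
      · intro C hC
        rcases List.mem_or_eq_of_mem_set hC with h | h
        · rw [List.eq_of_mem_replicate h]; exact MeasurableSet.univ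
        · rw [h]; exact hB
      · ext ω
        simp only [fcyl, Set.mem_preimage, Set.mem_setOf_eq, Set.mem_univ, true_and]
        rw [QQ_set_replicate (by omega) B]
  · rintro C ⟨S, L, hS, hL, rfl⟩
    exact measurableSet_fcyl_fromSA hS hL



lemma isPiSystem_sC (m : ℕ) : IsPiSystem (sC Z m) := by
  rintro s ⟨A₀, L, hA₀, hL, hlen, rfl⟩ t ⟨A₀', L', hA₀', hL', hlen', rfl⟩ -
  refine ⟨A₀ ∩ A₀', List.zipWith (· ∩ ·) L L', hA₀.inter hA₀', ?_, ?_, ?_⟩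
  · intro B hB
    obtain ⟨i, hi, rfl⟩ := List.mem_iff_getElem.mp hB
    rw [List.getElem_zipWith]
    exact (hL _ (List.getElem_mem _)).inter (hL' _ (List.getElem_mem _))
  · simp [List.length_zipWith, hlen, hlen']
  · ext ω
    simp only [cyl, Set.mem_inter_iff, Set.mem_setOf_eq]
    rw [QQ_zipWith_inter L L' 1 (by omega)]
    tauto

lemma isPiSystem_sF (m : ℕ) : IsPiSystem (sF Z m) := by
  rintro s ⟨S, L, hS, hL, rfl⟩ t ⟨S', L', hS', hL', rfl⟩ -
  set c := max L.length L'.length with hc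
  set Lp := L ++ List.replicate (c - L.length) (Set.univ : Set Z) with hLp
  set L'p := L' ++ List.replicate (c - L'.length) (Set.univ : Set Z) with hL'p
  have hlenp : Lp.length = c := by simp [hLp]; omega
  have hlenp' : L'p.length = c := by simp [hL'p]; omega
  have hmemp : ∀ B ∈ Lp, MeasurableSet B := by
    intro B hB
    rcases List.mem_append.mp hB with h | h
    · exact hL _ h
    · rw [List.eq_of_mem_replicate h]; exact MeasurableSet.univ
  have hmemp' : ∀ B ∈ L'p, MeasurableSet B := by
    intro B hB
    rcases List.mem_append.mp hB with h | h
    · exact hL' _ h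
    · rw [List.eq_of_mem_replicate h]; exact MeasurableSet.univ
  refine ⟨S ∩ S', List.zipWith (· ∩ ·) Lp L'p, hS.inter hS', ?_, ?_⟩
  · intro B hB
    obtain ⟨i, hi, rfl⟩ := List.mem_iff_getElem.mp hB
    rw [List.getElem_zipWith]
    exact (hmemp _ (List.getElem_mem _)).inter (hmemp' _ (List.getElem_mem _))
  · rw [fcyl_pad m (c - L.length) S L, fcyl_pad m (c - L'.length) S' L', ← hLp, ← hL'p]
    ext ω
    simp only [fcyl, Set.mem_inter_iff, Set.mem_setOf_eq]
    rw [QQ_zipWith_inter Lp L'p (m+1) (by omega)]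
    tauto

section Meas

variable {κ : ℕ → Kernel Z Z} [∀ n, IsMarkovKernel (κ n)] {μ₀ : Measure Z}
  [IsProbabilityMeasure μ₀] {P : Measure (ℕ → Z)} [IsProbabilityMeasure P]

lemma FDD_indicator
    (hP : ∀ (A₀ : Set Z) (L : List (Set Z)), MeasurableSet A₀ → (∀ A ∈ L, MeasurableSet A) →
      P (cyl A₀ L) = ∫⁻ z in A₀, chainProbSeq κ 0 L z ∂μ₀)
    {A₀ S : Set Z} {L : List (Set Z)} (hA₀ : MeasurableSet A₀)
    (hL : ∀ B ∈ L, MeasurableSet B) (hS : MeasurableSet S) :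
    ∫⁻ ω in cyl A₀ L, (S.indicator (fun _ => (1 : ℝ≥0∞))) (ω L.length) ∂P
      = ∫⁻ z in A₀, chainInt κ 0 L (S.indicator fun _ => 1) z ∂μ₀ := by
  have hpre : ∀ ω : ℕ → Z, S.indicator (fun _ => (1 : ℝ≥0∞)) (ω L.length)
      = ((fun ω : ℕ → Z => ω L.length) ⁻¹' S).indicator (fun _ => 1) ω := by
    intro ω
    by_cases h : ω L.length ∈ S <;> simp [Set.indicator_apply, h]
  have hmpre : MeasurableSet ((fun ω : ℕ → Z => ω L.length) ⁻¹' S) :=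
    (measurable_pi_apply L.length) hS
  have hLHS : ∫⁻ ω in cyl A₀ L, (S.indicator (fun _ => (1 : ℝ≥0∞))) (ω L.length) ∂P
      = P (cyl A₀ L ∩ fcyl L.length S ([])) := by
    rw [lintegral_congr hpre, lintegral_indicator hmpre, setLIntegral_one,
      Measure.restrict_apply hmpre, Set.inter_comm, fcyl_nil]
  rw [hLHS]
  rcases List.eq_nil_or_concat L with rfl | ⟨M, T, rfl⟩
  · simp only [List.length_nil]
    rw [cyl_inter_fcyl_nil, hP (A₀ ∩ S) ([]) (hA₀.inter hS) (by simp)]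
    have h1 : ∫⁻ z in A₀ ∩ S, chainProbSeq κ 0 ([] : List (Set Z)) z ∂μ₀ = μ₀ (A₀ ∩ S) := by
      simp [chainProbSeq]
    have hL2 : ∀ z : Z, chainInt κ 0 ([] : List (Set Z)) (S.indicator fun _ => 1) z
        = S.indicator (fun _ => (1 : ℝ≥0∞)) z := fun z => rfl
    have h2 : ∫⁻ z in A₀, chainInt κ 0 ([] : List (Set Z)) (S.indicator fun _ => 1) z ∂μ₀
        = μ₀ (S ∩ A₀) := by
      rw [lintegral_congr hL2, lintegral_indicator hS, setLIntegral_one,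
        Measure.restrict_apply hS]
    rw [h1, h2, Set.inter_comm]
  · simp only [List.concat_eq_append] at hL ⊢
    have hlen : (M ++ [T]).length = M.length + 1 := by simp
    rw [hlen, cyl_inter_fcyl_concat]
    have hmem : ∀ B ∈ M ++ [T ∩ S], MeasurableSet B := by
      intro B hB
      rcases List.mem_append.mp hB with h | h
      · exact hL _ (List.mem_append.mpr (Or.inl h))
      · simp at h; subst h
        exact (hL T (by simp)).inter hS
    have h2 : cyl A₀ (M ++ (T ∩ S) :: ([] : List (Set Z))) = cyl A₀ (M ++ [T ∩ S]) := rfl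
    rw [h2, hP A₀ (M ++ [T ∩ S]) hA₀ hmem]
    refine (lintegral_congr fun z => ?_).symm
    rw [chainInt_indicator κ (fun _ => 1) hS T M 0 z, chainInt_one]

lemma FDD
    (hP : ∀ (A₀ : Set Z) (L : List (Set Z)), MeasurableSet A₀ → (∀ A ∈ L, MeasurableSet A) →
      P (cyl A₀ L) = ∫⁻ z in A₀, chainProbSeq κ 0 L z ∂μ₀)
    {A₀ : Set Z} {L : List (Set Z)} (hA₀ : MeasurableSet A₀)
    (hL : ∀ B ∈ L, MeasurableSet B) {f : Z → ℝ≥0∞} (hf : Measurable f) :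
    ∫⁻ ω in cyl A₀ L, f (ω L.length) ∂P = ∫⁻ z in A₀, chainInt κ 0 L f z ∂μ₀ := by
  have hsimple : ∀ g : SimpleFunc Z ℝ≥0∞, ∫⁻ ω in cyl A₀ L, g (ω L.length) ∂P
      = ∫⁻ z in A₀, chainInt κ 0 L (⇑g) z ∂μ₀ := by
    intro g
    induction g using SimpleFunc.induction with
    | const c hs =>
      rename_i s
      have hcoe : ∀ z : Z, (SimpleFunc.piecewise s hs (SimpleFunc.const Z c)
          (SimpleFunc.const Z 0)) z = c * (s.indicator (fun _ => (1 : ℝ≥0∞))) z := fun z => by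
        by_cases h : z ∈ s <;> simp [SimpleFunc.piecewise_apply, h, Set.indicator_apply]
      have hmi : Measurable (s.indicator (fun _ => (1 : ℝ≥0∞))) := measurable_const.indicator hs
      calc ∫⁻ ω in cyl A₀ L,
            (SimpleFunc.piecewise s hs (SimpleFunc.const Z c) (SimpleFunc.const Z 0))
              (ω L.length) ∂P
          = ∫⁻ ω in cyl A₀ L, c * (s.indicator (fun _ => (1 : ℝ≥0∞))) (ω L.length) ∂P :=
            lintegral_congr fun ω => hcoe _
        _ = c * ∫⁻ ω in cyl A₀ L, (s.indicator fun _ => (1 : ℝ≥0∞)) (ω L.length) ∂P :=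
            lintegral_const_mul c (hmi.comp (measurable_pi_apply L.length))
        _ = c * ∫⁻ z in A₀, chainInt κ 0 L (s.indicator fun _ => 1) z ∂μ₀ := by
            rw [FDD_indicator hP hA₀ hL hs]
        _ = ∫⁻ z in A₀, c * chainInt κ 0 L (s.indicator fun _ => 1) z ∂μ₀ :=
            (lintegral_const_mul c (measurable_chainInt κ hmi L 0 hL)).symm
        _ = ∫⁻ z in A₀, chainInt κ 0 L (fun y => c * (s.indicator fun _ => (1 : ℝ≥0∞)) y) z ∂μ₀ :=
            lintegral_congr fun z => (chainInt_const_mul κ hmi c L 0 hL z).symm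
        _ = ∫⁻ z in A₀, chainInt κ 0 L
              (⇑(SimpleFunc.piecewise s hs (SimpleFunc.const Z c) (SimpleFunc.const Z 0))) z ∂μ₀ := by
            refine lintegral_congr fun z => ?_
            congr 1
            funext y
            exact (hcoe y).symm
    | add hdisj hf' hg' =>
      rename_i f g
      have hfm := f.measurable
      have hgm := g.measurable
      calc ∫⁻ ω in cyl A₀ L, (⇑(f + g)) (ω L.length) ∂P
          = ∫⁻ ω in cyl A₀ L, (f (ω L.length) + g (ω L.length)) ∂P :=
            lintegral_congr fun ω => by simp
        _ = (∫⁻ ω in cyl A₀ L, f (ω L.length) ∂P) + ∫⁻ ω in cyl A₀ L, g (ω L.length) ∂P :=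
            lintegral_add_left (hfm.comp (measurable_pi_apply L.length)) _
        _ = (∫⁻ z in A₀, chainInt κ 0 L (⇑f) z ∂μ₀) + ∫⁻ z in A₀, chainInt κ 0 L (⇑g) z ∂μ₀ := by
            rw [hf', hg']
        _ = ∫⁻ z in A₀, (chainInt κ 0 L (⇑f) z + chainInt κ 0 L (⇑g) z) ∂μ₀ :=
            (lintegral_add_left (measurable_chainInt κ hfm L 0 hL) _).symm
        _ = ∫⁻ z in A₀, chainInt κ 0 L (⇑(f + g)) z ∂μ₀ := by
            refine lintegral_congr fun z => ?_
            rw [← chainInt_add κ hfm hgm L 0 hL z]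
            congr 1
  have h1 : ∫⁻ ω in cyl A₀ L, f (ω L.length) ∂P
      = ⨆ n, ∫⁻ ω in cyl A₀ L, (SimpleFunc.eapprox f n) (ω L.length) ∂P :=
    calc ∫⁻ ω in cyl A₀ L, f (ω L.length) ∂P
        = ∫⁻ ω in cyl A₀ L, ⨆ n, (SimpleFunc.eapprox f n) (ω L.length) ∂P :=
          lintegral_congr fun ω => (SimpleFunc.iSup_eapprox_apply hf _).symm
      _ = ⨆ n, ∫⁻ ω in cyl A₀ L, (SimpleFunc.eapprox f n) (ω L.length) ∂P :=
          lintegral_iSup' (fun n => ((SimpleFunc.eapprox f n).measurable.comp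
              (measurable_pi_apply L.length)).aemeasurable)
            (Filter.Eventually.of_forall fun ω i j hij =>
              SimpleFunc.monotone_eapprox f hij _)
  have h3 : ∫⁻ z in A₀, chainInt κ 0 L f z ∂μ₀
      = ⨆ n, ∫⁻ z in A₀, chainInt κ 0 L (⇑(SimpleFunc.eapprox f n)) z ∂μ₀ :=
    calc ∫⁻ z in A₀, chainInt κ 0 L f z ∂μ₀
        = ∫⁻ z in A₀, ⨆ n, chainInt κ 0 L (⇑(SimpleFunc.eapprox f n)) z ∂μ₀ := by
          refine lintegral_congr fun z => ?_
          rw [← chainInt_iSup κ (fun n => (SimpleFunc.eapprox f n).measurable)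
            (fun i j hij w => SimpleFunc.monotone_eapprox f hij w) L 0 hL z]
          congr 1
          funext y
          exact (SimpleFunc.iSup_eapprox_apply hf y).symm
      _ = ⨆ n, ∫⁻ z in A₀, chainInt κ 0 L (⇑(SimpleFunc.eapprox f n)) z ∂μ₀ :=
          lintegral_iSup' (fun n => (measurable_chainInt κ (SimpleFunc.measurable _) L 0
              hL).aemeasurable)
            (Filter.Eventually.of_forall fun z i j hij =>
              chainInt_mono κ (fun w => SimpleFunc.monotone_eapprox f hij w) L 0 z)
  rw [h1, h3]
  exact iSup_congr fun n => hsimple (SimpleFunc.eapprox f n)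

end Meas

lemma cyl_univ (m : ℕ) :
    cyl (Set.univ : Set Z) (List.replicate m (Set.univ : Set Z)) = Set.univ := by
  ext ω; simp [cyl, QQ_replicate_univ ω 1 m]

section Markov

variable {κ : ℕ → Kernel Z Z} [∀ n, IsMarkovKernel (κ n)] {μ₀ : Measure Z}
  [IsProbabilityMeasure μ₀] {P : Measure (ℕ → Z)} [IsProbabilityMeasure P]

lemma identity_all_C (m : ℕ) {A : Set (ℕ → Z)} (hA : MeasurableSet A)
    {g : Z → ℝ≥0∞} (hg : Measurable g)
    (hbase : ∀ C ∈ sC Z m, P (C ∩ A) = ∫⁻ ω in C, g (ω m) ∂P) :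
    ∀ C, MeasurableSet[FF Z m] C → P (C ∩ A) = ∫⁻ ω in C, g (ω m) ∂P := by
  have huniv : P A = ∫⁻ ω, g (ω m) ∂P := by
    have h := hbase (cyl (Set.univ : Set Z) (List.replicate m (Set.univ : Set Z)))
      ⟨Set.univ, List.replicate m Set.univ, MeasurableSet.univ,
        (fun B hB => by rw [List.eq_of_mem_replicate hB]; exact MeasurableSet.univ),
        by simp, rfl⟩
    rwa [cyl_univ, Set.univ_inter, Measure.restrict_univ] at h
  refine MeasurableSpace.induction_on_inter (m := FF Z m)
    (C := fun C _ => P (C ∩ A) = ∫⁻ ω in C, g (ω m) ∂P)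
    (FF_eq_generateFrom m) (isPiSystem_sC m) (by simp) hbase ?_ ?_
  · intro C hCFF hCid
    have hCamb : MeasurableSet C := FF_le_pi m _ hCFF
    have e1 : P (C ∩ A) + P (Cᶜ ∩ A) = P A := by
      have := measure_inter_add_diff (μ := P) A hCamb
      rwa [Set.diff_eq, Set.inter_comm A C, Set.inter_comm A Cᶜ] at this
    have e2 : (∫⁻ ω in C, g (ω m) ∂P) + ∫⁻ ω in Cᶜ, g (ω m) ∂P = ∫⁻ ω, g (ω m) ∂P :=
      lintegral_add_compl _ hCamb
    have hfin : P (C ∩ A) ≠ ∞ := measure_ne_top P _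
    rw [hCid, huniv] at e1
    rw [← e2] at e1
    exact (ENNReal.add_right_inj (by rw [← hCid]; exact hfin)).mp e1
  · intro f hdisj hmeasFF hids
    have hmeas : ∀ i, MeasurableSet (f i) := fun i => FF_le_pi m _ (hmeasFF i)
    rw [Set.iUnion_inter, measure_iUnion
      (hdisj.mono fun i j h => h.mono Set.inter_subset_left Set.inter_subset_left)
      (fun i => (hmeas i).inter hA),
      lintegral_iUnion hmeas hdisj]
    exact tsum_congr hids

lemma g_ae_le_one (m : ℕ) {A : Set (ℕ → Z)} {g : Z → ℝ≥0∞} (hg : Measurable g)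
    (hid : ∀ C, MeasurableSet[FF Z m] C → P (C ∩ A) = ∫⁻ ω in C, g (ω m) ∂P) :
    ∀ᵐ ω ∂P, g (ω m) ≤ 1 := by
  have hnull : ∀ n : ℕ,
      P ((fun ω : ℕ → Z => ω m) ⁻¹' {z | 1 + ((n : ℝ≥0∞))⁻¹ ≤ g z}) = 0 := by
    intro n
    set c : ℝ≥0∞ := 1 + ((n : ℝ≥0∞))⁻¹ with hc
    have hDmeas : MeasurableSet {z | c ≤ g z} := hg measurableSet_Ici
    set C := (fun ω : ℕ → Z => ω m) ⁻¹' {z | c ≤ g z} with hCdef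
    have hCFF : MeasurableSet[FF Z m] C :=
      measurableSet_preimage_of_comap_le (comap_le_FF le_rfl) hDmeas
    have hCamb : MeasurableSet C := FF_le_pi m _ hCFF
    have h1 : c * P C ≤ ∫⁻ ω in C, g (ω m) ∂P := by
      rw [← setLIntegral_const C c]
      exact setLIntegral_mono (hg.comp (measurable_pi_apply m)) fun ω hω => hω
    have h4 : P C + ((n : ℝ≥0∞))⁻¹ * P C ≤ P C := by
      have : P C + ((n : ℝ≥0∞))⁻¹ * P C = c * P C := by rw [hc]; ring
      rw [this]
      exact h1.trans ((hid C hCFF).symm.le.trans (measure_mono Set.inter_subset_left))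
    by_contra hne
    have hinv : ((n : ℝ≥0∞))⁻¹ * P C ≠ 0 :=
      mul_ne_zero (ENNReal.inv_ne_zero.mpr (ENNReal.natCast_ne_top n)) hne
    exact absurd ((ENNReal.lt_add_right (measure_ne_top P C) hinv).trans_le h4) (lt_irrefl _)
  rw [ae_iff]
  refine measure_mono_null (fun ω hω => ?_) (measure_iUnion_null hnull)
  simp only [Set.mem_setOf_eq, not_le] at hω
  have hpos : g (ω m) - 1 ≠ 0 := (tsub_pos_of_lt hω).ne'
  obtain ⟨n, hn⟩ := ENNReal.exists_inv_nat_lt hpos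
  refine Set.mem_iUnion.mpr ⟨n, ?_⟩
  simp only [Set.mem_preimage, Set.mem_setOf_eq]
  calc 1 + ((n : ℝ≥0∞))⁻¹ ≤ 1 + (g (ω m) - 1) := add_le_add_right hn.le 1
  _ = g (ω m) := add_tsub_cancel_of_le hω.le

lemma exists_g
    (hP : ∀ (A₀ : Set Z) (L : List (Set Z)), MeasurableSet A₀ → (∀ A ∈ L, MeasurableSet A) →
      P (cyl A₀ L) = ∫⁻ z in A₀, chainProbSeq κ 0 L z ∂μ₀)
    (m : ℕ) {A : Set (ℕ → Z)} (hA : MeasurableSet[fromSA Z m] A) :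
    ∃ g : Z → ℝ≥0∞, Measurable g ∧
      ∀ C, MeasurableSet[FF Z m] C → P (C ∩ A) = ∫⁻ ω in C, g (ω m) ∂P := by
  have hAamb0 := (fromSA_le_pi (Z := Z) m)
  refine MeasurableSpace.induction_on_inter (m := fromSA Z m)
    (C := fun A _ => ∃ g : Z → ℝ≥0∞, Measurable g ∧ ∀ C, MeasurableSet[FF Z m] C →
      P (C ∩ A) = ∫⁻ ω in C, g (ω m) ∂P)
    (fromSA_eq_generateFrom m) (isPiSystem_sF m)
    ⟨0, measurable_const, fun C _ => by simp⟩ ?_ ?_ ?_ _ hA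
  · rintro A ⟨S, L, hS, hL, rfl⟩
    have hmeasP : Measurable (chainProbSeq κ m L) := by
      have h1 : chainProbSeq κ m L = chainInt κ m L (fun _ => 1) :=
        funext fun z => (chainInt_one κ L m z).symm
      rw [h1]
      exact measurable_chainInt κ measurable_const L m hL
    refine ⟨S.indicator (chainProbSeq κ m L), hmeasP.indicator hS, ?_⟩
    refine identity_all_C m (fromSA_le_pi m _ (measurableSet_fcyl_fromSA hS hL)) 
      (hmeasP.indicator hS) ?_
    rintro C ⟨A₀, LC, hA₀, hLC, hlen, rfl⟩
    have hfm : Measurable (S.indicator (chainProbSeq κ m L)) := hmeasP.indicator hS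
    subst hlen
    rw [FDD hP hA₀ hLC hfm]
    rcases List.eq_nil_or_concat LC with rfl | ⟨M, T, rfl⟩
    · simp only [List.length_nil] at *
      rw [cyl_inter_fcyl_nil, hP (A₀ ∩ S) L (hA₀.inter hS) hL]
      have h2 : ∫⁻ z in A₀, chainInt κ 0 ([] : List (Set Z))
          (S.indicator (chainProbSeq κ 0 L)) z ∂μ₀
          = ∫⁻ z in S ∩ A₀, chainProbSeq κ 0 L z ∂μ₀ := by
        have : ∀ z : Z, chainInt κ 0 ([] : List (Set Z))
            (S.indicator (chainProbSeq κ 0 L)) z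
            = S.indicator (chainProbSeq κ 0 L) z := fun z => rfl
        rw [lintegral_congr this, lintegral_indicator hS, Measure.restrict_restrict hS]
      rw [h2, Set.inter_comm]
    · simp only [List.concat_eq_append] at *
      have hlen2 : (M ++ [T]).length = M.length + 1 := by simp
      rw [hlen2, cyl_inter_fcyl_concat]
      have hmem : ∀ B ∈ M ++ (T ∩ S) :: L, MeasurableSet B := by
        intro B hB
        rcases List.mem_append.mp hB with h | h
        · exact hLC _ (List.mem_append.mpr (Or.inl h))
        · rcases List.mem_cons.mp h with h | h
          · subst h; exact (hLC T (by simp)).inter hS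
          · exact hL _ h
      rw [hP A₀ (M ++ (T ∩ S) :: L) hA₀ hmem]
      refine (lintegral_congr fun z => ?_).symm
      calc chainInt κ 0 (M ++ [T]) (S.indicator (chainProbSeq κ (M.length + 1) L)) z
          = chainInt κ 0 (M ++ [T ∩ S]) (chainProbSeq κ (M.length + 1) L) z :=
            chainInt_indicator κ _ hS T M 0 z
        _ = chainInt κ 0 (M ++ [T ∩ S]) (chainInt κ (0 + (M ++ [T ∩ S]).length) L
              (fun _ => 1)) z := by
            congr 1
            funext y
            rw [show (0 + (M ++ [T ∩ S]).length) = M.length + 1 by simp]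
            exact (chainInt_one κ L _ y).symm
        _ = chainInt κ 0 ((M ++ [T ∩ S]) ++ L) (fun _ => 1) z :=
            (chainInt_append κ (fun _ => 1) L (M ++ [T ∩ S]) 0 z).symm
        _ = chainProbSeq κ 0 (M ++ (T ∩ S) :: L) z := by
            rw [show (M ++ [T ∩ S]) ++ L = M ++ (T ∩ S) :: L by simp]
            exact chainInt_one κ _ 0 z
  · intro A hAm hQ
    obtain ⟨g, hg, hid⟩ := hQ
    have hAamb : MeasurableSet A := hAamb0 _ hAm
    have hae : ∀ᵐ ω ∂P, g (ω m) ≤ 1 := g_ae_le_one m hg hid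
    have hgm : Measurable fun ω : ℕ → Z => g (ω m) := hg.comp (measurable_pi_apply m)
    refine ⟨fun z => 1 - g z, measurable_const.sub hg, fun C hC => ?_⟩
    have hCamb : MeasurableSet C := FF_le_pi m _ hC
    have e1 : P (C ∩ A) + P (C ∩ Aᶜ) = P C := by
      have := measure_inter_add_diff (μ := P) C hAamb
      rwa [Set.diff_eq] at this
    have e2 : (∫⁻ ω in C, g (ω m) ∂P) + (∫⁻ ω in C, 1 - g (ω m) ∂P) = P C := by
      rw [← lintegral_add_left hgm]
      have hcongr : ∀ᵐ ω ∂(P.restrict C), g (ω m) + (1 - g (ω m)) = 1 :=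
        ae_restrict_of_ae (hae.mono fun ω h => by
          rw [add_tsub_cancel_of_le h])
      rw [lintegral_congr_ae hcongr, setLIntegral_one]
    rw [hid C hC] at e1
    rw [← e2] at e1
    exact (ENNReal.add_right_inj (by rw [← hid C hC]; exact measure_ne_top P _)).mp e1
  · intro f hdisj hmeasF hQ
    choose g hgmeas hgid using hQ
    refine ⟨fun z => ∑' i, g i z, Measurable.ennreal_tsum hgmeas, fun C hC => ?_⟩
    have hCamb : MeasurableSet C := FF_le_pi m _ hC
    have hmeas : ∀ i, MeasurableSet (f i) := fun i => hAamb0 _ (hmeasF i)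
    rw [Set.inter_iUnion, measure_iUnion
      (hdisj.mono fun i j h => h.mono Set.inter_subset_right Set.inter_subset_right)
      (fun i => hCamb.inter (hmeas i))]
    have h4 : ∀ i, P (C ∩ f i) = ∫⁻ ω in C, g i (ω m) ∂P := fun i => hgid i C hC
    have h5 : ∫⁻ ω in C, (∑' i, g i (ω m)) ∂P = ∑' i, ∫⁻ ω in C, g i (ω m) ∂P :=
      lintegral_tsum fun i => ((hgmeas i).comp (measurable_pi_apply m)).aemeasurable.restrict
    rw [tsum_congr h4, ← h5]

end Markov

section Condexp

variable {κ : ℕ → Kernel Z Z} [∀ n, IsMarkovKernel (κ n)] {μ₀ : Measure Z}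
  [IsProbabilityMeasure μ₀] {P : Measure (ℕ → Z)} [IsProbabilityMeasure P]

lemma condexp_eq
    (hP : ∀ (A₀ : Set Z) (L : List (Set Z)), MeasurableSet A₀ → (∀ A ∈ L, MeasurableSet A) →
      P (cyl A₀ L) = ∫⁻ z in A₀, chainProbSeq κ 0 L z ∂μ₀)
    (m : ℕ) {A : Set (ℕ → Z)} (hA : MeasurableSet[fromSA Z m] A) :
    ∃ g : Z → ℝ≥0∞, Measurable g ∧ (∀ᵐ ω ∂P, g (ω m) ≤ 1) ∧
      P[A.indicator (fun _ => (1 : ℝ)) | FF Z m] =ᵐ[P] fun ω => (g (ω m)).toReal := by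
  obtain ⟨g, hg, hid⟩ := exists_g hP m hA
  have hae : ∀ᵐ ω ∂P, g (ω m) ≤ 1 := g_ae_le_one m hg hid
  have hAamb : MeasurableSet A := fromSA_le_pi m _ hA
  have hm : FF Z m ≤ (inferInstance : MeasurableSpace (ℕ → Z)) := FF_le_pi m
  have hgm : Measurable fun ω : ℕ → Z => g (ω m) := hg.comp (measurable_pi_apply m)
  have hevalFF : Measurable[FF Z m] fun ω : ℕ → Z => ω m :=
    measurable_iff_comap_le.mpr (comap_le_FF le_rfl)
  have hgmFF : Measurable[FF Z m] fun ω : ℕ → Z => (g (ω m)).toReal :=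
    ENNReal.measurable_toReal.comp (hg.comp hevalFF)
  refine ⟨g, hg, hae, (ae_eq_condExp_of_forall_setIntegral_eq hm ?_ ?_ ?_ ?_).symm⟩
  · exact (integrable_const (1 : ℝ)).indicator hAamb
  · intro s _ _
    refine Integrable.mono' (integrable_const (1 : ℝ))
      ((ENNReal.measurable_toReal.comp hgm).aestronglyMeasurable.restrict) ?_
    refine ae_restrict_of_ae (hae.mono fun ω h => ?_)
    rw [Real.norm_of_nonneg ENNReal.toReal_nonneg]
    calc (g (ω m)).toReal ≤ (1 : ℝ≥0∞).toReal := ENNReal.toReal_mono one_ne_top h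
    _ = 1 := by simp
  · intro s hs _
    have hsamb : MeasurableSet s := hm _ hs
    have hLHS : ∫ x in s, (g (x m)).toReal ∂P = (∫⁻ x in s, g (x m) ∂P).toReal :=
      integral_toReal hgm.aemeasurable.restrict
        (ae_restrict_of_ae (hae.mono fun ω h => lt_of_le_of_lt h ENNReal.one_lt_top))
    have hRHS : ∫ x in s, A.indicator (fun _ => (1 : ℝ)) x ∂P = (P (A ∩ s)).toReal := by
      have h9 : ∫ x in s, A.indicator (1 : (ℕ → Z) → ℝ) x ∂P = ((P.restrict s) A).toReal :=
        integral_indicator_one hAamb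
      rw [Measure.restrict_apply hAamb] at h9
      exact h9
    rw [hLHS, hRHS, ← hid s hs, Set.inter_comm]
  · exact (Measurable.stronglyMeasurable hgmFF).aestronglyMeasurable

/-- The filtration `σ(z_0,…,z_n)`. -/
def FFfiltration (Z : Type*) [MeasurableSpace Z] :
    Filtration ℕ (inferInstance : MeasurableSpace (ℕ → Z)) :=
  ⟨FF Z, FF_mono, fun n => FF_le_pi n⟩

lemma markov_tail_approx
    (hP : ∀ (A₀ : Set Z) (L : List (Set Z)), MeasurableSet A₀ → (∀ A ∈ L, MeasurableSet A) →
      P (cyl A₀ L) = ∫⁻ z in A₀, chainProbSeq κ 0 L z ∂μ₀)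
    (φ : ℕ → ℕ) (hφ : ∀ n, n ≤ φ n) {A : Set (ℕ → Z)}
    (hA : MeasurableSet[⨅ n : ℕ, fromSA Z n] A) :
    ∃ B : Set (ℕ → Z), MeasurableSet[⨅ N : ℕ, ⨆ k : ℕ, ⨆ _ : N ≤ k,
      MeasurableSpace.comap (fun ω : ℕ → Z => ω (φ k)) inferInstance] B ∧
      P (symmDiff A B) = 0 := by
  have hAn : ∀ n : ℕ, MeasurableSet[fromSA Z n] A := fun n => (iInf_le (fromSA Z) n) _ hA
  have hAamb : MeasurableSet A := fromSA_le_pi 0 _ (hAn 0)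
  choose g hgmeas hgae hgcond using fun n => condexp_eq hP (φ n) (hAn (φ n))
  set F : Filtration ℕ (inferInstance : MeasurableSpace (ℕ → Z)) := FFfiltration Z with hF
  have hsm : StronglyMeasurable[⨆ n, F n] (A.indicator fun _ => (1 : ℝ)) := by
    have hFsup : (⨆ n, F n) = (inferInstance : MeasurableSpace (ℕ → Z)) := iSup_FF
    rw [hFsup]
    exact stronglyMeasurable_const.indicator hAamb
  have hint : Integrable (A.indicator fun _ => (1 : ℝ)) P := (integrable_const 1).indicator hAamb
  have hlevy := hint.tendsto_ae_condExp hsm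
  have hcond : ∀ᵐ ω ∂P, ∀ n,
      (P[A.indicator (fun _ => (1 : ℝ)) | FF Z (φ n)]) ω = ((g n) (ω (φ n))).toReal :=
    ae_all_iff.mpr fun n => hgcond n
  have haeb : ∀ᵐ ω ∂P, ∀ n, (g n) (ω (φ n)) ≤ 1 := ae_all_iff.mpr fun n => hgae n
  set h : (ℕ → Z) → ℝ≥0∞ := fun ω => Filter.limsup (fun n => (g n) (ω (φ n))) Filter.atTop
    with hh
  refine ⟨h ⁻¹' {1}, ?_, ?_⟩
  · rw [MeasurableSpace.measurableSet_iInf]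
    intro N
    have hmeasN : Measurable[⨆ k : ℕ, ⨆ _ : N ≤ k,
        MeasurableSpace.comap (fun ω : ℕ → Z => ω (φ k)) inferInstance] h := by
      have hrw : h = fun ω => Filter.limsup (fun n => (g (n + N)) (ω (φ (n + N))))
          Filter.atTop := by
        funext ω
        exact (Filter.limsup_nat_add _ N).symm
      rw [hrw]
      refine Measurable.limsup fun n => ?_
      have hev : Measurable[⨆ k : ℕ, ⨆ _ : N ≤ k,
          MeasurableSpace.comap (fun ω : ℕ → Z => ω (φ k)) inferInstance]
          fun ω : ℕ → Z => ω (φ (n + N)) :=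
        measurable_iff_comap_le.mpr
          (le_iSup_of_le (n + N) (le_iSup_of_le (Nat.le_add_left N n) le_rfl))
      exact (hgmeas (n + N)).comp hev
    exact hmeasN (measurableSet_singleton 1)
  · refine measure_eq_zero_iff_ae_notMem.mpr ?_
    filter_upwards [hlevy, hcond, haeb] with ω hlim hc hb
    have hφt : Tendsto φ atTop atTop := tendsto_atTop_mono hφ tendsto_id
    have hlim' : Tendsto (fun n => ((g n) (ω (φ n))).toReal) atTop
        (𝓝 ((A.indicator (fun _ => (1 : ℝ))) ω)) :=
      (hlim.comp hφt).congr fun k => hc k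
    have hfin : ∀ n, (g n) (ω (φ n)) ≠ ∞ := fun n =>
      ne_top_of_le_ne_top one_ne_top (hb n)
    by_cases hmem : ω ∈ A
    · have hone : (A.indicator (fun _ => (1 : ℝ))) ω = 1 := by simp [hmem]
      rw [hone] at hlim'
      have htend : Tendsto (fun n => (g n) (ω (φ n))) atTop (𝓝 1) := by
        have h2 := (ENNReal.continuous_ofReal.tendsto 1).comp hlim'
        have h3 : ∀ n, ENNReal.ofReal (((g n) (ω (φ n))).toReal) = (g n) (ω (φ n)) :=
          fun n => ENNReal.ofReal_toReal (hfin n)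
        simpa [ENNReal.ofReal_one] using h2.congr fun n => h3 n
      have hBone : h ω = 1 := htend.limsup_eq
      intro hsym
      rcases Set.mem_symmDiff.mp hsym with ⟨-, hnB⟩ | ⟨-, hnA⟩
      · exact hnB hBone
      · exact hnA hmem
    · have hzero : (A.indicator (fun _ => (1 : ℝ))) ω = 0 := by simp [hmem]
      rw [hzero] at hlim'
      have htend : Tendsto (fun n => (g n) (ω (φ n))) atTop (𝓝 0) := by
        have h2 := (ENNReal.continuous_ofReal.tendsto 0).comp hlim'
        have h3 : ∀ n, ENNReal.ofReal (((g n) (ω (φ n))).toReal) = (g n) (ω (φ n)) :=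
          fun n => ENNReal.ofReal_toReal (hfin n)
        simpa using h2.congr fun n => h3 n
      have hBzero : h ω = 0 := htend.limsup_eq
      intro hsym
      rcases Set.mem_symmDiff.mp hsym with ⟨hmemA, -⟩ | ⟨hB, -⟩
      · exact hmem hmemA
      · rw [Set.mem_preimage, Set.mem_singleton_iff, hBzero] at hB
        exact one_ne_zero hB.symm

end Condexp

lemma tailEvenLike_le_tail (φ : ℕ → ℕ) (hφ : ∀ n, n ≤ φ n) :
    (⨅ N : ℕ, ⨆ k : ℕ, ⨆ _ : N ≤ k,
      MeasurableSpace.comap (fun ω : ℕ → Z => ω (φ k)) inferInstance)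
      ≤ ⨅ n : ℕ, fromSA Z n := by
  refine le_iInf fun n => iInf_le_of_le n ?_
  refine iSup_le fun k => iSup_le fun hk => ?_
  exact comap_le_fromSA (le_trans (le_trans hk (hφ k)) le_rfl)

end S5

/-- The tail σ-algebra `F_tail = ⋂_{n≥0} σ(z_m : m ≥ n)` on `Z^ℕ`. -/
def tailSA (Z : Type*) [MeasurableSpace Z] : MeasurableSpace (ℕ → Z) :=
  ⨅ n : ℕ, fromSA Z n

/-- The even tail σ-algebra `F_tail,even = ⋂_{n≥0} σ(z_{2k} : k ≥ n)`. -/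
def tailEvenSA (Z : Type*) [MeasurableSpace Z] : MeasurableSpace (ℕ → Z) :=
  ⨅ n : ℕ, ⨆ k : ℕ, ⨆ _ : n ≤ k,
    MeasurableSpace.comap (fun ω : ℕ → Z => ω (2 * k)) inferInstance

/-- The odd tail σ-algebra `F_tail,odd = ⋂_{n≥0} σ(z_{2k+1} : k ≥ n)`. -/
def tailOddSA (Z : Type*) [MeasurableSpace Z] : MeasurableSpace (ℕ → Z) :=
  ⨅ n : ℕ, ⨆ k : ℕ, ⨆ _ : n ≤ k,
    MeasurableSpace.comap (fun ω : ℕ → Z => ω (2 * k + 1)) inferInstance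

/-- For the Ionescu–Tulcea measure of a sequence of Markov kernels, every tail
set agrees up to a null set with an even-tail set and with an odd-tail set; consequently the
tail σ-algebra is trivial iff the even (equivalently, the odd) tail σ-algebra is trivial. -/
theorem statement5
    {Z : Type*} [MeasurableSpace Z] [StandardBorelSpace Z]
    (κ : ℕ → Kernel Z Z) [∀ n, IsMarkovKernel (κ n)]
    (μ₀ : Measure Z) [IsProbabilityMeasure μ₀]
    (P : Measure (ℕ → Z)) [IsProbabilityMeasure P]
    -- P is the Ionescu–Tulcea measure: its finite-dimensional distributions are
    -- ℙ(z₀ ∈ A₀, …, z_n ∈ A_n) = ∫_{A₀} μ₀(dz₀) ∫_{A₁} κ₀(z₀,dz₁) ⋯ ∫_{A_n} κ_{n−1}(z_{n−1},dz_n)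
    (hP : ∀ (A₀ : Set Z) (L : List (Set Z)), MeasurableSet A₀ →
      (∀ A ∈ L, MeasurableSet A) →
      P {ω | ω 0 ∈ A₀ ∧ ∀ i : Fin L.length, ω (1 + (i : ℕ)) ∈ L.get i} =
        ∫⁻ z in A₀, chainProbSeq κ 0 L z ∂μ₀) :
    (∀ A : Set (ℕ → Z), MeasurableSet[tailSA Z] A →
      (∃ B : Set (ℕ → Z), MeasurableSet[tailEvenSA Z] B ∧ P (symmDiff A B) = 0) ∧
      (∃ B' : Set (ℕ → Z), MeasurableSet[tailOddSA Z] B' ∧ P (symmDiff A B') = 0)) ∧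
    ((∀ A : Set (ℕ → Z), MeasurableSet[tailSA Z] A → P A = 0 ∨ P A = 1) ↔
      (∀ A : Set (ℕ → Z), MeasurableSet[tailEvenSA Z] A → P A = 0 ∨ P A = 1)) ∧
    ((∀ A : Set (ℕ → Z), MeasurableSet[tailSA Z] A → P A = 0 ∨ P A = 1) ↔
      (∀ A : Set (ℕ → Z), MeasurableSet[tailOddSA Z] A → P A = 0 ∨ P A = 1)) := by
  have hP' : ∀ (A₀ : Set Z) (L : List (Set Z)), MeasurableSet A₀ →
      (∀ A ∈ L, MeasurableSet A) →
      P (S5.cyl A₀ L) = ∫⁻ z in A₀, chainProbSeq κ 0 L z ∂μ₀ := fun A₀ L h1 h2 =>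
    hP A₀ L h1 h2
  have heven : ∀ A : Set (ℕ → Z), MeasurableSet[tailSA Z] A →
      ∃ B : Set (ℕ → Z), MeasurableSet[tailEvenSA Z] B ∧ P (symmDiff A B) = 0 := by
    intro A hA
    exact S5.markov_tail_approx hP' (fun k => 2 * k) (fun n => by omega) hA
  have hodd : ∀ A : Set (ℕ → Z), MeasurableSet[tailSA Z] A →
      ∃ B : Set (ℕ → Z), MeasurableSet[tailOddSA Z] B ∧ P (symmDiff A B) = 0 := by
    intro A hA
    exact S5.markov_tail_approx hP' (fun k => 2 * k + 1) (fun n => by omega) hA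
  have heven_le : tailEvenSA Z ≤ tailSA Z :=
    S5.tailEvenLike_le_tail (fun k => 2 * k) (fun n => by omega)
  have hodd_le : tailOddSA Z ≤ tailSA Z :=
    S5.tailEvenLike_le_tail (fun k => 2 * k + 1) (fun n => by omega)
  refine ⟨fun A hA => ⟨heven A hA, hodd A hA⟩, ⟨?_, ?_⟩, ⟨?_, ?_⟩⟩
  · intro htriv A hA
    exact htriv A (heven_le A hA)
  · intro htriv A hA
    obtain ⟨B, hB, hnull⟩ := heven A hA
    have : P A = P B := measure_congr (MeasureTheory.measure_symmDiff_eq_zero_iff.mp hnull)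
    rw [this]
    exact htriv B hB
  · intro htriv A hA
    exact htriv A (hodd_le A hA)
  · intro htriv A hA
    obtain ⟨B, hB, hnull⟩ := hodd A hA
    have : P A = P B := measure_congr (MeasureTheory.measure_symmDiff_eq_zero_iff.mp hnull)
    rw [this]
    exact htriv B hB
end
end

section
/- Let Ξ be a finite set and Π = (Π_{jk})_{j,k∈Ξ} a matrix with nonnegative real entries. Let λ > 0 and let h = (h_j) and α = (α_j) be vectors with strictly positive entries such that Πh = λh, αΠ = λα and Σ_j α_j h_j = 1; assume moreover that every nonzero vector with nonnegative entries which is a right eigenvector of Π with eigenvalue λ is a positive scalar multiple of h. Let ι : Ξ → Ξ be an involution with Π_{ι(j)ι(k)} = Π_{kj} for all j, k ∈ Ξ. Define the Parry transition probabilities p_{jk} = Π_{jk} h_k / (λ h_j) and the stationary distribution p_j = α_j h_j. Then for all j, k ∈ Ξ: p_{ι(j)} = p_j and p_{ι(j)ι(k)} = p_k · p_{kj} / p_j. -/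
open Finset

/-- Symmetries of the Parry measure coming from a time-reversing involution
`ι` of a nonnegative matrix `M` with Perron–Frobenius data `(lam, h, α)`: the stationary
distribution `p_j = α_j h_j` satisfies `p_{ι(j)} = p_j` and the Parry transition probabilities
`p_{jk} = M_{jk} h_k / (lam h_j)` satisfy `p_{ι(j)ι(k)} = p_k p_{kj} / p_j`. -/
theorem statement8
    {Ξ : Type*} [Fintype Ξ]
    (M : Ξ → Ξ → ℝ) (hM : ∀ j k, 0 ≤ M j k)
    (lam : ℝ) (hlam : 0 < lam)
    (h α : Ξ → ℝ) (hh : ∀ j, 0 < h j) (hα : ∀ j, 0 < α j)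
    (hright : ∀ j, ∑ k, M j k * h k = lam * h j)
    (hleft : ∀ k, ∑ j, α j * M j k = lam * α k)
    (hnorm : ∑ j, α j * h j = 1)
    -- every nonzero nonnegative right λ-eigenvector of M is a positive multiple of h
    (huniq : ∀ v : Ξ → ℝ, v ≠ 0 → (∀ j, 0 ≤ v j) →
      (∀ j, ∑ k, M j k * v k = lam * v j) → ∃ c : ℝ, 0 < c ∧ v = c • h)
    (ι : Ξ → Ξ) (hinv : ∀ j, ι (ι j) = j)
    (hMι : ∀ j k, M (ι j) (ι k) = M k j) :
    ∀ j k : Ξ,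
      α (ι j) * h (ι j) = α j * h j ∧
      M (ι j) (ι k) * h (ι k) / (lam * h (ι j)) =
        (α k * h k) * (M k j * h j / (lam * h k)) / (α j * h j) := by
  intro j k
  have hι : Function.Involutive ι := hinv
  have heig : ∀ j, ∑ k, M j k * (α (ι k)) = lam * α (ι j) := by
    intro j
    have h1 : ∑ k, M j k * α (ι k) = ∑ m, α m * M m (ι j) := by
      rw [← Equiv.sum_comp hι.toPerm (fun m => α m * M m (ι j))]
      refine Finset.sum_congr rfl fun k _ => ?_
      simp only [Function.Involutive.coe_toPerm]
      rw [hMι k j]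
      ring
    rw [h1, hleft]
  have hvne : (fun k => α (ι k)) ≠ 0 := by
    intro hv
    have := congrFun hv j
    simp at this
    exact absurd this (ne_of_gt (hα (ι j)))
  obtain ⟨c, hc, hv⟩ := huniq (fun k => α (ι k)) hvne (fun k => (hα (ι k)).le) heig
  have hvk : ∀ k, α (ι k) = c * h k := fun k => congrFun hv k
  have hhk : ∀ k, h (ι k) = α k / c := by
    intro k
    have := hvk (ι k)
    rw [hinv k] at this
    field_simp
    linarith
  have hc0 : c ≠ 0 := ne_of_gt hc
  have hαj := hα j; have hαk := hα k; have hhj := hh j; have hhk' := hh k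
  constructor
  · rw [hvk j, hhk j]; field_simp
  · rw [hMι j k, hhk k, hhk j]
    field_simp
end
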